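/- arXiv:2409.03323 — 4 statements merged into one kernel-verified Lean document; each statement's English description precedes it below -/
import Mathlib

section
/- Under the Setup: if there are indices 1 ≤ j < i ≤ t−1 with v_i, v_j ∈ e_1 ∩ U and (e_i ∩ e_j) ∖ U ≠ ∅, then N_H(v_{i−1}) ⊆ F ∖ {e_t} and N_H(v_j) ⊆ F ∖ {e_t}; and if there are indices 2 ≤ j < i ≤ t with v_{i−1}, v_{j−1} ∈ e_t ∩ U and (e_i ∩ e_j) ∖ U ≠ ∅, then N_H(v_{i−1}) ⊆ F ∖ {e_1} and N_H(v_j) ⊆ F ∖ {e_1}. -/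
namespace BergeM

def MIsBergePath {n : ℕ} (E : Multiset (Finset (Fin n))) (k : ℕ)
    (v : Fin (k + 1) → Fin n) (f : Fin k → Finset (Fin n)) : Prop :=
  Function.Injective v ∧ (↑(List.ofFn f) : Multiset (Finset (Fin n))) ≤ E ∧
    ∀ i : Fin k, v i.castSucc ∈ f i ∧ v i.succ ∈ f i

def MHasBergePath {n : ℕ} (E : Multiset (Finset (Fin n))) (k : ℕ) : Prop :=
  ∃ v f, MIsBergePath E k v f

def MBPFree {n : ℕ} (E : Multiset (Finset (Fin n))) (k : ℕ) : Prop :=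
  ¬ MHasBergePath E k

def MConnected {n : ℕ} (E : Multiset (Finset (Fin n))) : Prop :=
  ∀ x y : Fin n, ∃ (k : ℕ) (v : Fin (k + 1) → Fin n) (f : Fin k → Finset (Fin n)),
    MIsBergePath E k v f ∧ (∃ i, v i = x) ∧ (∃ i, v i = y)

def MUniform {n : ℕ} (E : Multiset (Finset (Fin n))) (r : ℕ) : Prop :=
  ∀ e ∈ E, e.card = r

def MIsBergeCycle {n : ℕ} (E : Multiset (Finset (Fin n))) (k : ℕ)
    (v : Fin k → Fin n) (f : Fin k → Finset (Fin n)) : Prop :=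
  Function.Injective v ∧ (↑(List.ofFn f) : Multiset (Finset (Fin n))) ≤ E ∧
    ∀ i : Fin k, v i ∈ f i ∧ v ⟨(i.val + 1) % k, Nat.mod_lt _ i.pos⟩ ∈ f i

def MHasBergeCycle {n : ℕ} (E : Multiset (Finset (Fin n))) (k : ℕ) : Prop :=
  ∃ v f, MIsBergeCycle E k v f

def edgeNbhd {n : ℕ} (E : Multiset (Finset (Fin n))) (S : Finset (Fin n)) :
    Multiset (Finset (Fin n)) :=
  E.filter fun e => (e ∩ S).Nonempty


inductive Good {n : ℕ} : List (Fin n) → List (Finset (Fin n)) → Prop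
  | single (x) : Good [x] []
  | cons (x y g) {L M} : x ∈ g → y ∈ g → Good (y :: L) M → Good (x :: y :: L) (g :: M)

lemma Good.length_eq {n : ℕ} {L : List (Fin n)} {M} (h : Good L M) :
    L.length = M.length + 1 := by
  induction h with
  | single x => rfl
  | cons x y g h1 h2 h3 ih => simpa using ih

lemma Good.append {n : ℕ} : ∀ {L₁ : List (Fin n)} {M₁ L₂ M₂ x},
    Good (L₁ ++ [x]) M₁ → Good (x :: L₂) M₂ →
    Good (L₁ ++ x :: L₂) (M₁ ++ M₂) := by
  intro L₁
  induction L₁ with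
  | nil =>
    intro M₁ L₂ M₂ x h1 h2
    cases h1; simpa
  | cons z L₁' ih =>
    intro M₁ L₂ M₂ x h1 h2
    cases L₁' with
    | nil =>
      cases h1 with
      | cons _ _ g hz hx h' =>
        cases h'
        exact Good.cons z x g hz hx h2
    | cons z' rest =>
      cases h1 with
      | cons _ _ g hz hz' h' =>
        exact Good.cons z z' g hz hz' (ih h' h2)

lemma Good.reverse {n : ℕ} {L : List (Fin n)} {M} (h : Good L M) :
    Good L.reverse M.reverse := by
  induction h with
  | single x => simpa using Good.single x
  | @cons x y g L M h1 h2 h3 ih =>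
    have hrev : Good (L.reverse ++ [y]) M.reverse := by simpa using ih
    have h4 : Good (y :: [x]) [g] := Good.cons y x g h2 h1 (Good.single x)
    have := Good.append hrev h4
    simpa [List.reverse_cons, List.append_assoc] using this

lemma Good.getElem {n : ℕ} {L : List (Fin n)} {M} (h : Good L M) :
    ∀ i, (hi : i < M.length) → ∀ (h1 : i < L.length) (h2 : i + 1 < L.length),
      L[i] ∈ M[i] ∧ L[i+1] ∈ M[i] := by
  induction h with
  | single x => intro i hi; simp at hi
  | cons x y g hx hy hg ih =>
    intro i hi h1 h2
    match i with
    | 0 => simpa using ⟨hx, hy⟩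
    | (i+1) =>
      simp only [List.getElem_cons_succ]
      exact ih i (by simpa using hi) (by simpa using h1) (by simpa using h2)


lemma good_asc {n : ℕ} (v : ℕ → Fin n) (e : ℕ → Finset (Fin n)) :
    ∀ (l a : ℕ), (∀ m, a ≤ m → m < a + l → v m ∈ e (m+1) ∧ v (m+1) ∈ e (m+1)) →
    Good ((List.range' a (l+1)).map v) ((List.range' (a+1) l).map e) := by
  intro l
  induction l with
  | zero => intro a _; simpa using Good.single (v a)
  | succ l ih =>
    intro a h
    have h0 := h a (le_refl a) (by omega)
    have hrest := ih (a+1) (fun m hm hm2 => h m (by omega) (by omega))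
    rw [List.range'_succ (s := a+1) (n := l), List.map_cons] at hrest
    rw [List.range'_succ (s := a) (n := l+1), List.range'_succ (s := a+1) (n := l)]
    simp only [List.map_cons]
    exact Good.cons (v a) (v (a+1)) (e (a+1)) h0.1 h0.2 hrest

lemma mpath_of_list {n : ℕ} (E : Multiset (Finset (Fin n))) (m : ℕ)
    (L : List (Fin n)) (M : List (Finset (Fin n))) (hnd : L.Nodup)
    (hlenM : M.length = m) (hg : Good L M) (hle : (↑M : Multiset (Finset (Fin n))) ≤ E) :
    MHasBergePath E m := by
  have hlen : L.length = m + 1 := by rw [hg.length_eq, hlenM]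
  refine ⟨fun i => L[i.val]'(by omega), fun i => M[i.val]'(by omega), ?_, ?_, ?_⟩
  · intro a b hab
    apply Fin.ext
    exact (List.Nodup.getElem_inj_iff hnd).1 hab
  · have : List.ofFn (fun i : Fin m => M[i.val]'(by omega)) = M := by
      subst hlenM
      exact List.ofFn_getElem
    rw [this]; exact hle
  · intro i
    have := hg.getElem i.val (by omega) (by omega) (by omega)
    simpa using this

lemma mcycle_of_list {n : ℕ} (E : Multiset (Finset (Fin n))) (m : ℕ)
    (x : Fin n) (L' : List (Fin n)) (M : List (Finset (Fin n)))
    (hnd : (x :: L').Nodup) (hlen : L'.length + 1 = m) (hlenM : M.length = m)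
    (hg : Good (x :: (L' ++ [x])) M)
    (hle : (↑M : Multiset (Finset (Fin n))) ≤ E) : MHasBergeCycle E m := by
  have hlenbig : (x :: (L' ++ [x])).length = m + 1 := by simp; omega
  refine ⟨fun i => (x :: L')[i.val]'(by simp; omega), fun i => M[i.val]'(by omega), ?_, ?_, ?_⟩
  · intro a b hab
    dsimp only at hab
    exact Fin.ext ((List.Nodup.getElem_inj_iff hnd).1 hab)
  · have : List.ofFn (fun i : Fin m => M[i.val]'(by omega)) = M := by
      subst hlenM
      exact List.ofFn_getElem
    rw [this]; exact hle
  · intro i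
    dsimp only
    have hbig : ∀ (s : ℕ) (hs : s < m), (x :: (L' ++ [x]))[s]'(by omega) = (x :: L')[s]'(by simp; omega) := by
      intro s hs
      match s with
      | 0 => rfl
      | (s+1) =>
        simp only [List.getElem_cons_succ]
        rw [List.getElem_append_left (by omega)]
    have h1 := hg.getElem i.val (by omega) (by omega) (by omega)
    constructor
    · have h2 := h1.1
      rw [hbig i.val (by omega)] at h2
      exact h2
    · rcases Nat.lt_or_ge (i.val + 1) m with hlt | hge
      · have hm1 : (i.val + 1) % m = i.val + 1 := Nat.mod_eq_of_lt hlt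
        have h2 := h1.2
        rw [hbig (i.val+1) hlt] at h2
        simp only [hm1]
        exact h2
      · have him : i.val + 1 = m := by omega
        have hm0 : (i.val + 1) % m = 0 := by rw [him]; exact Nat.mod_self m
        have h2 := h1.2
        have hlast : (x :: (L' ++ [x]))[i.val + 1]'(by omega) = x := by
          simp only [List.getElem_cons_succ]
          rw [List.getElem_append_right (by omega)]
          have : i.val - L'.length = 0 := by omega
          simp [this]
        rw [hlast] at h2
        simp only [hm0]
        exact h2

lemma mhasPath_mono {n : ℕ} {E : Multiset (Finset (Fin n))} {s t : ℕ}
    (h : MHasBergePath E t) (hst : s ≤ t) : MHasBergePath E s := by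
  obtain ⟨v, f, hinj, hle, hadj⟩ := h
  refine ⟨fun i => v ⟨i.val, by omega⟩, fun i => f ⟨i.val, by omega⟩, ?_, ?_, ?_⟩
  · intro a b hab
    have h2 : ((⟨a.val, by omega⟩ : Fin (t+1)) : ℕ) = ((⟨b.val, by omega⟩ : Fin (t+1)) : ℕ) :=
      congrArg Fin.val (hinj hab)
    exact Fin.ext h2
  · have heq : List.ofFn (fun i : Fin s => f ⟨i.val, by omega⟩) = (List.ofFn f).take s := by
      apply List.ext_getElem
      · simp [hst]
      · intro i h1 h2
        rw [List.getElem_take]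
        simp [List.getElem_ofFn]
    rw [heq]
    exact le_trans (Multiset.coe_le.2 ((List.take_sublist s _).subperm)) hle
  · intro i
    have := hadj ⟨i.val, by omega⟩
    constructor
    · have h1 : (⟨i.val, by omega⟩ : Fin (s+1)) = Fin.castSucc i := rfl
      have := this.1
      convert this using 2 <;> simp [Fin.ext_iff]
    · have := this.2
      convert this using 2 <;> simp [Fin.ext_iff]


lemma core {n : ℕ} (E : Multiset (Finset (Fin n))) (r t : ℕ)
    (hu : MUniform E r) (hrt : t + 1 ≤ r) (ht3 : 3 ≤ t)
    (hmax : ∀ s : ℕ, MHasBergePath E s → s ≤ t)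
    (hcyc : ¬ MHasBergeCycle E t)
    (e : ℕ → Finset (Fin n))
    (he : (↑((List.range t).map fun i => e (i + 1)) : Multiset (Finset (Fin n))) ≤ E)
    (z x : Fin n) (hz : z ∈ e t)
    (mid : List (Fin n)) (M : List (Finset (Fin n)))
    (hnd : (z :: (mid ++ [x])).Nodup)
    (hlen : (z :: (mid ++ [x])).length = t)
    (hM : (↑M : Multiset (Finset (Fin n))) = ↑((List.range (t-1)).map fun i => e (i + 1)))
    (hg : Good (z :: (mid ++ [x])) M) :
    edgeNbhd E {x} ≤ (↑((List.range (t-1)).map fun i => e (i + 1)) : Multiset (Finset (Fin n))) := by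
  by_contra hcon
  rw [Multiset.le_iff_count] at hcon
  push_neg at hcon
  obtain ⟨a, ha⟩ := hcon
  have hamem : a ∈ edgeNbhd E {x} := by
    rw [← Multiset.count_pos]
    omega
  rw [edgeNbhd, Multiset.mem_filter] at hamem
  obtain ⟨haE, hax'⟩ := hamem
  obtain ⟨y0, hy0⟩ := hax'
  rw [Finset.mem_inter, Finset.mem_singleton] at hy0
  have hax : x ∈ a := hy0.2 ▸ hy0.1
  have hcount : Multiset.count a (↑((List.range (t-1)).map fun i => e (i + 1)) :
      Multiset (Finset (Fin n))) < Multiset.count a E :=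
    lt_of_lt_of_le ha (Multiset.count_le_of_le a (Multiset.filter_le _ E))
  have ht1 : t - 1 + 1 = t := by omega
  have hesplit : (↑((List.range t).map fun i => e (i+1)) : Multiset (Finset (Fin n))) =
      (↑((List.range (t-1)).map fun i => e (i + 1)) : Multiset (Finset (Fin n))) + {e t} := by
    conv_lhs => rw [← ht1]
    rw [List.range_succ, List.map_append, ← Multiset.coe_add]
    simp [ht1]
  have hMlen : M.length = t - 1 := by
    have := congrArg Multiset.card hM
    simpa using this
  rcases eq_or_ne a (e t) with hat | hat
  · -- a = e t : build a Berge cycle of length t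
    apply hcyc
    have hgood1 : Good ((z :: mid) ++ [x]) M := by simpa using hg
    have hgood2 : Good (x :: [z]) [e t] :=
      Good.cons x z (e t) (hat ▸ hax) hz (Good.single z)
    have hgood3 := Good.append hgood1 hgood2
    refine mcycle_of_list E t z (mid ++ [x]) (M ++ [e t]) hnd
      (by simpa using hlen) (by simp [hMlen]; omega) (by simpa using hgood3) ?_
    have : (↑(M ++ [e t]) : Multiset (Finset (Fin n))) =
        (↑((List.range t).map fun i => e (i+1)) : Multiset (Finset (Fin n))) := by
      rw [hesplit, ← Multiset.coe_add, hM]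
      simp
    rw [this]
    exact he
  · -- a ≠ e t : build a Berge path of length t + 1
    exfalso
    set L : List (Fin n) := z :: (mid ++ [x]) with hLdef
    have hPcard : L.toFinset.card = t := by
      rw [List.toFinset_card_of_nodup hnd, hlen]
    have hetE : e t ∈ E := by
      refine Multiset.mem_of_le he ?_
      rw [Multiset.mem_coe, List.mem_map]
      exact ⟨t - 1, by rw [List.mem_range]; omega, by rw [ht1]⟩
    have hret : (e t).card = r := hu _ hetE
    have hra : a.card = r := hu a haE
    -- pick u, y
    have hpick : ∃ u y1 : Fin n, u ∈ e t ∧ y1 ∈ a ∧ u ∉ L ∧ y1 ∉ L ∧ u ≠ y1 := by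
      have hne : ∀ (b : Finset (Fin n)), b.card = r → (b \ L.toFinset).Nonempty := by
        intro b hb
        rw [Finset.sdiff_nonempty]
        intro hsub
        have := Finset.card_le_card hsub
        omega
      obtain ⟨u, hu1⟩ := hne (e t) hret
      rw [Finset.mem_sdiff] at hu1
      by_cases hy2 : ∃ y1 ∈ a \ L.toFinset, y1 ≠ u
      · obtain ⟨y1, hy1, hyu⟩ := hy2
        rw [Finset.mem_sdiff] at hy1
        exact ⟨u, y1, hu1.1, hy1.1, by simpa [List.mem_toFinset] using hu1.2,
          by simpa [List.mem_toFinset] using hy1.2, fun h => hyu h.symm⟩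
      · push_neg at hy2
        have haeq : a = insert u L.toFinset := by
          apply Finset.eq_of_subset_of_card_le
          · intro b hb
            by_cases hbP : b ∈ L.toFinset
            · exact Finset.mem_insert_of_mem hbP
            · rw [Finset.mem_insert]
              exact Or.inl (hy2 b (Finset.mem_sdiff.2 ⟨hb, hbP⟩))
          · rw [hra]
            calc (insert u L.toFinset).card ≤ L.toFinset.card + 1 :=
                  Finset.card_insert_le _ _
              _ ≤ r := by omega
        by_cases hu2 : ∃ u' ∈ e t \ L.toFinset, u' ≠ u
        · obtain ⟨u', hu', huu⟩ := hu2
          rw [Finset.mem_sdiff] at hu'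
          refine ⟨u', u, hu'.1, by rw [haeq]; exact Finset.mem_insert_self u _,
            by simpa [List.mem_toFinset] using hu'.2,
            by simpa [List.mem_toFinset] using hu1.2, huu⟩
        · push_neg at hu2
          have heteq : e t = insert u L.toFinset := by
            apply Finset.eq_of_subset_of_card_le
            · intro b hb
              by_cases hbP : b ∈ L.toFinset
              · exact Finset.mem_insert_of_mem hbP
              · rw [Finset.mem_insert]
                exact Or.inl (hu2 b (Finset.mem_sdiff.2 ⟨hb, hbP⟩))
            · rw [hret]
              calc (insert u L.toFinset).card ≤ L.toFinset.card + 1 :=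
                  Finset.card_insert_le _ _
                _ ≤ r := by omega
          exact absurd (haeq.trans heteq.symm) hat
    obtain ⟨u, y1, hue, hy1a, huL, hy1L, huy⟩ := hpick
    -- build the path u :: L ++ [y1]
    have hg1 : Good ([u] ++ z :: (mid ++ [x])) ([e t] ++ M) :=
      Good.append (Good.cons u z (e t) hue hz (Good.single z)) hg
    have hg2 : Good ((u :: z :: mid) ++ [x]) ([e t] ++ M) := by simpa using hg1
    have hg3 : Good (x :: [y1]) [a] := Good.cons x y1 a hax hy1a (Good.single y1)
    have hg4 := Good.append hg2 hg3
    have hpath : MHasBergePath E (t + 1) := by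
      refine mpath_of_list E (t+1) ((u :: z :: mid) ++ x :: [y1]) (([e t] ++ M) ++ [a])
        ?_ (by simp [hMlen]; omega) hg4 ?_
      · have h1 : ((u :: z :: mid) ++ x :: [y1]) = u :: (L ++ [y1]) := by simp [hLdef]
        rw [h1, List.nodup_cons, List.nodup_append]
        refine ⟨?_, hnd, by simp, ?_⟩
        · simp only [List.mem_append, List.mem_singleton]
          rintro (h | h)
          · exact huL h
          · exact huy h
        · intro b hb
          simp only [List.mem_singleton]
          intro hb1
          intro hb2 hb3
          subst hb2
          exact hy1L (hb3 ▸ hb)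
      · have heq : (↑(([e t] ++ M) ++ [a]) : Multiset (Finset (Fin n))) =
            (↑((List.range t).map fun i => e (i+1)) : Multiset (Finset (Fin n))) + {a} := by
          rw [hesplit, ← Multiset.coe_add, ← Multiset.coe_add, hM,
            Multiset.coe_singleton, Multiset.coe_singleton]
          ac_rfl
        rw [heq, Multiset.le_iff_count]
        intro b
        rcases eq_or_ne b a with rfl | hba
        · have hca : Multiset.count b ((↑((List.range t).map fun i => e (i+1)) :
              Multiset (Finset (Fin n)))) = Multiset.count b
              ((↑((List.range (t-1)).map fun i => e (i+1)) : Multiset (Finset (Fin n)))) := by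
            rw [hesplit, Multiset.count_add, Multiset.count_singleton, if_neg hat, add_zero]
          rw [Multiset.count_add, hca, Multiset.count_singleton, if_pos rfl]
          omega
        · rw [Multiset.count_add, Multiset.count_singleton, if_neg hba, add_zero]
          exact Multiset.le_iff_count.1 he b
    have := hmax (t+1) hpath
    omega


lemma Good.glue {n : ℕ} {L₁ : List (Fin n)} {M₁ L₂ M₂ x y g}
    (h₁ : Good (L₁ ++ [x]) M₁) (hx : x ∈ g) (hy : y ∈ g) (h₂ : Good (y :: L₂) M₂) :
    Good (L₁ ++ x :: y :: L₂) (M₁ ++ g :: M₂) :=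
  Good.append h₁ (Good.cons x y g hx hy h₂)

lemma core' {n : ℕ} (E : Multiset (Finset (Fin n))) (r t : ℕ)
    (hu : MUniform E r) (hrt : t + 1 ≤ r) (ht3 : 3 ≤ t)
    (hmax : ∀ s : ℕ, MHasBergePath E s → s ≤ t)
    (hcyc : ¬ MHasBergeCycle E t)
    (e : ℕ → Finset (Fin n))
    (he : (↑((List.range t).map fun i => e (i + 1)) : Multiset (Finset (Fin n))) ≤ E)
    (L : List (Fin n)) (M : List (Finset (Fin n)))
    (hnd : L.Nodup) (hlen : L.length = t)
    (z x : Fin n) (hz : z ∈ e t)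
    (hhead : L.head? = some z) (hlast : L.getLast? = some x)
    (hM : (↑M : Multiset (Finset (Fin n))) = ↑((List.range (t-1)).map fun i => e (i + 1)))
    (hg : Good L M) :
    edgeNbhd E {x} ≤ (↑((List.range (t-1)).map fun i => e (i + 1)) : Multiset (Finset (Fin n))) := by
  cases L with
  | nil => simp at hhead
  | cons z0 L' =>
    obtain rfl : z = z0 := by
      have := hhead
      simp only [List.head?_cons] at this
      exact (Option.some.inj this).symm
    rcases List.eq_nil_or_concat L' with rfl | ⟨mid, x0, rfl⟩
    · simp at hlen; omega
    · simp only [List.concat_eq_append] at hnd hlen hlast hg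
      obtain rfl : x = x0 := by
        have h1 : (z :: (mid ++ [x0])).getLast? = some x0 := by
          rw [show z :: (mid ++ [x0]) = (z :: mid) ++ [x0] by simp]
          exact List.getLast?_concat
        rw [h1] at hlast
        exact (Option.some.inj hlast).symm
      exact core E r t hu hrt ht3 hmax hcyc e he z x hz mid M hnd hlen hM hg

lemma nodup_build {n t : ℕ} (v : ℕ → Fin n) (hvinj : Set.InjOn v (Set.Icc 1 (t-1)))
    (w : Fin n) (hwU : ∀ m : ℕ, 1 ≤ m → m ≤ t-1 → w ≠ v m)
    (I1 I2 : List ℕ) (hnd : (I1 ++ I2).Nodup)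
    (hsub : ∀ m ∈ I1 ++ I2, 1 ≤ m ∧ m ≤ t - 1) :
    (I1.map v ++ w :: I2.map v).Nodup := by
  have hmapnd : ((I1 ++ I2).map v).Nodup := by
    apply List.Nodup.map_on _ hnd
    intro a ha b hb hab
    exact hvinj ⟨(hsub a ha).1, (hsub a ha).2⟩ ⟨(hsub b hb).1, (hsub b hb).2⟩ hab
  have hperm : (I1.map v ++ w :: I2.map v).Perm (w :: (I1 ++ I2).map v) := by
    rw [List.map_append]
    exact List.perm_middle
  apply hperm.nodup_iff.2
  rw [List.nodup_cons]
  constructor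
  · intro hmem
    rw [List.mem_map] at hmem
    obtain ⟨m, hm, hme⟩ := hmem
    exact hwU m (hsub m hm).1 (hsub m hm).2 hme.symm
  · exact hmapnd

lemma perm_build (t : ℕ) (I : List ℕ) (hnd : I.Nodup)
    (hsub : ∀ m ∈ I, 1 ≤ m ∧ m ≤ t - 1) (hlen : I.length = t - 1) :
    (↑I : Multiset ℕ) = ↑(List.range' 1 (t-1)) := by
  have hsp : I.Subperm (List.range' 1 (t-1)) := by
    apply List.subperm_of_subset hnd
    intro m hm
    rw [List.mem_range'_1]
    have := hsub m hm
    omega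
  apply Multiset.eq_of_le_of_card_le (Multiset.coe_le.2 hsp)
  simp [hlen]

lemma map_e_range' {n : ℕ} (e : ℕ → Finset (Fin n)) (l : ℕ) :
    (List.range' 1 l).map e = (List.range l).map (fun i => e (i+1)) := by
  rw [List.range'_eq_map_range, List.map_map]
  apply List.map_congr_left
  intro a _
  simp [Nat.add_comm]


lemma cons_asc {α : Type*} (f : ℕ → α) (a l : ℕ) (hl : 0 < l) :
    (List.range' a l).map f = f a :: (List.range' (a+1) (l-1)).map f := by
  conv_lhs => rw [show l = (l-1)+1 by omega, List.range'_succ]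
  simp

lemma snoc_asc {α : Type*} (f : ℕ → α) (a l : ℕ) (hl : 0 < l) :
    (List.range' a l).map f = (List.range' a (l-1)).map f ++ [f (a+l-1)] := by
  conv_lhs => rw [show l = (l-1)+1 by omega, List.range'_concat]
  rw [List.map_append]
  simp [show a + 1*(l-1) = a+l-1 by omega, show a + (l-1) = a+l-1 by omega]

lemma snoc_desc {α : Type*} (f : ℕ → α) (a l : ℕ) (hl : 0 < l) :
    ((List.range' a l).map f).reverse = ((List.range' (a+1) (l-1)).map f).reverse ++ [f a] := by
  rw [cons_asc f a l hl]; simp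

lemma cons_desc {α : Type*} (f : ℕ → α) (a l : ℕ) (hl : 0 < l) :
    ((List.range' a l).map f).reverse = f (a+l-1) :: ((List.range' a (l-1)).map f).reverse := by
  rw [snoc_asc f a l hl]; simp

lemma getLast?_asc {α : Type*} (f : ℕ → α) (a l : ℕ) (hl : 0 < l) :
    ((List.range' a l).map f).getLast? = some (f (a+l-1)) := by
  rw [snoc_asc f a l hl]
  exact List.getLast?_concat

lemma head?_desc {α : Type*} (f : ℕ → α) (a l : ℕ) (hl : 0 < l) :
    (((List.range' a l).map f).reverse).head? = some (f (a+l-1)) := by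
  rw [cons_desc f a l hl]
  rfl

lemma master {n : ℕ} (E : Multiset (Finset (Fin n))) (r t : ℕ)
    (hu : MUniform E r) (hrt : t + 1 ≤ r)
    (hmax : ∀ s : ℕ, MHasBergePath E s → s ≤ t)
    (hcyc : ¬ MHasBergeCycle E t)
    (e : ℕ → Finset (Fin n)) (v : ℕ → Fin n)
    (he : (↑((List.range t).map fun i => e (i + 1)) : Multiset (Finset (Fin n))) ≤ E)
    (hvinj : Set.InjOn v (Set.Icc 1 (t - 1)))
    (hv1 : v 1 ∈ e 1) (hvt : v (t - 1) ∈ e t)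
    (hvmid : ∀ m : ℕ, 2 ≤ m → m ≤ t - 1 → v (m - 1) ∈ e m ∧ v m ∈ e m)
    (i j : ℕ) (hj1 : 1 ≤ j) (hji : j < i) (hit : i ≤ t - 1)
    (hvi : v i ∈ e 1) (hvj : v j ∈ e 1)
    (w : Fin n) (hwi : w ∈ e i) (hwj : w ∈ e j)
    (hwU : w ∉ (Finset.Icc 1 (t-1)).image v) :
    edgeNbhd E {v (i-1)} ≤
      (↑((List.range (t-1)).map fun s => e (s+1)) : Multiset (Finset (Fin n))) ∧
    edgeNbhd E {v j} ≤
      (↑((List.range (t-1)).map fun s => e (s+1)) : Multiset (Finset (Fin n))) := by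
  have hi2 : 2 ≤ i := by omega
  have ht3 : 3 ≤ t := by omega
  have hwU' : ∀ m : ℕ, 1 ≤ m → m ≤ t-1 → w ≠ v m := by
    intro m h1 h2 heq
    exact hwU (Finset.mem_image.2 ⟨m, Finset.mem_Icc.2 ⟨h1, h2⟩, heq.symm⟩)
  -- adjacency helper
  have hadj : ∀ (a l : ℕ), 1 ≤ a → a + l ≤ t - 1 →
      Good ((List.range' a (l+1)).map v) ((List.range' (a+1) l).map e) := by
    intro a l ha hal
    apply good_asc
    intro m hm hm2
    have h := hvmid (m+1) (by omega) (by omega)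
    rw [Nat.add_sub_cancel] at h
    exact h
  -- shared first segment : desc (i .. t-1)
  have hS1 : Good ((List.range' i (t-i)).map v) ((List.range' (i+1) (t-1-i)).map e) := by
    have h := hadj i (t-1-i) (by omega) (by omega)
    rw [show t-1-i+1 = t-i by omega] at h
    exact h
  have hS1r : Good (((List.range' i (t-i)).map v).reverse)
      (((List.range' (i+1) (t-1-i)).map e).reverse) := hS1.reverse
  -- multiset target rewriting
  have hms : ∀ (IM : List ℕ) (M : List (Finset (Fin n))), M = IM.map e → IM.Nodup →
      (∀ m ∈ IM, 1 ≤ m ∧ m ≤ t - 1) → IM.length = t - 1 →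
      (↑M : Multiset (Finset (Fin n))) = ↑((List.range (t-1)).map fun s => e (s+1)) := by
    intro IM M hMeq hnd hsub hlen
    subst hMeq
    rw [← map_e_range' e (t-1)]
    have h1 := perm_build t IM hnd hsub hlen
    calc (↑(IM.map e) : Multiset (Finset (Fin n))) = Multiset.map e ↑IM := by
          simp
      _ = Multiset.map e ↑(List.range' 1 (t-1)) := by rw [h1]
      _ = ↑((List.range' 1 (t-1)).map e) := by simp
  -- Claim 1 : endpoint v (i-1)
  have claim1 : edgeNbhd E {v (i-1)} ≤
      (↑((List.range (t-1)).map fun s => e (s+1)) : Multiset (Finset (Fin n))) := by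
    rcases Nat.lt_or_ge 1 j with hj2 | hj2'
    · -- case j ≥ 2
      -- S6 : asc j .. i-1, cons form at v j
      have hS6 : Good ((List.range' j (i-j)).map v) ((List.range' (j+1) (i-1-j)).map e) := by
        have h := hadj j (i-1-j) (by omega) (by omega)
        rw [show i-1-j+1 = i-j by omega] at h
        exact h
      rw [cons_asc v j (i-j) (by omega)] at hS6
      -- S45 : desc (1 .. j-1), snoc form at v 1
      have hS4 : Good (((List.range' 1 (j-1)).map v).reverse)
          (((List.range' 2 (j-2)).map e).reverse) := by
        have h := hadj 1 (j-2) (by omega) (by omega)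
        rw [show (j-2)+1 = j-1 by omega, show (1:ℕ)+1 = 2 from rfl] at h
        exact h.reverse
      rw [snoc_desc v 1 (j-1) (by omega)] at hS4
      rw [show (1:ℕ)+1 = 2 from rfl, show j-1-1 = j-2 by omega] at hS4
      -- glue e 1
      have hA5 := Good.glue hS4 hv1 hvj hS6
      -- re-fuse and expose head v (j-1)
      rw [show ((List.range' 2 (j-2)).map v).reverse ++ v 1 ::
            v j :: (List.range' (j+1) (i-j-1)).map v
          = ((List.range' 1 (j-1)).map v).reverse ++ v j ::
            (List.range' (j+1) (i-j-1)).map v from by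
        rw [snoc_desc v 1 (j-1) (by omega), show (1:ℕ)+1 = 2 from rfl,
          show j-1-1 = j-2 by omega]
        simp] at hA5
      rw [cons_desc v 1 (j-1) (by omega), show 1+(j-1)-1 = j-1 by omega,
        show j-1-1 = j-2 by omega, List.cons_append] at hA5
      -- glue e j with [w]
      have hA4 := Good.glue
        (show Good (([] : List (Fin n)) ++ [w]) [] from Good.single w) hwj
        (hvmid j (by omega) (by omega)).1 hA5
      rw [List.nil_append, List.nil_append] at hA4
      -- glue e i with desc (i .. t-1)
      rw [snoc_desc v i (t-i) (by omega)] at hS1r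
      have hA1 := Good.glue hS1r (hvmid i (by omega) (by omega)).2 hwi hA4
      -- canonical form
      have hAeq : ((List.range' i (t-i)).map v).reverse ++ w ::
            (((List.range' 1 (j-1)).map v).reverse ++ (List.range' j (i-j)).map v)
          = ((List.range' (i+1) (t-i-1)).map v).reverse ++ v i :: w :: v (j-1) ::
            (((List.range' 1 (j-2)).map v).reverse ++ v j ::
              (List.range' (j+1) (i-j-1)).map v) := by
        rw [snoc_desc v i (t-i) (by omega), cons_desc v 1 (j-1) (by omega),
          cons_asc v j (i-j) (by omega)]
        rw [show 1+(j-1)-1 = j-1 by omega, show j-1-1 = j-2 by omega]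
        simp
      rw [← hAeq] at hA1
      -- apply core'
      apply core' E r t hu hrt ht3 hmax hcyc e he _ _ ?nd ?ln (v (t-1)) (v (i-1)) hvt
        ?hd ?lt ?ms hA1
      case nd =>
        have h := nodup_build v hvinj w hwU' ((List.range' i (t-i)).reverse)
          ((List.range' 1 (j-1)).reverse ++ List.range' j (i-j)) ?_ ?_
        · simpa [List.map_reverse] using h
        · rw [List.nodup_append, List.nodup_append]
          refine ⟨by simp [List.nodup_range'], ⟨by simp [List.nodup_range'],
            List.nodup_range', ?_⟩, ?_⟩ <;>
          · intro m hm m' hm2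
            simp only [List.mem_reverse, List.mem_append, List.mem_range'_1] at hm hm2
            omega
        · intro m hm
          simp only [List.mem_reverse, List.mem_append, List.mem_range'_1] at hm
          omega
      case ln => simp [List.length_append, List.length_reverse, List.length_map,
          List.length_range']; omega
      case hd =>
        rw [cons_desc v i (t-i) (by omega), show i+(t-i)-1 = t-1 by omega, List.cons_append]
        rfl
      case lt =>
        rw [snoc_asc v j (i-j) (by omega), show j+(i-j)-1 = i-1 by omega]
        rw [show ((List.range' i (t-i)).map v).reverse ++ w ::
              (((List.range' 1 (j-1)).map v).reverse ++
                ((List.range' j (i-j-1)).map v ++ [v (i-1)]))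
            = (((List.range' i (t-i)).map v).reverse ++ w ::
              (((List.range' 1 (j-1)).map v).reverse ++
                (List.range' j (i-j-1)).map v)) ++ [v (i-1)] from by simp]
        exact List.getLast?_concat
      case ms =>
        apply hms ((List.range' (i+1) (t-1-i)).reverse ++ i :: j ::
          ((List.range' 2 (j-2)).reverse ++ 1 :: List.range' (j+1) (i-1-j)))
        · simp [List.map_reverse]
        · rw [List.nodup_append, List.nodup_cons, List.nodup_cons, List.nodup_append,
            List.nodup_cons]
          refine ⟨by simp [List.nodup_range'], ⟨?_, ?_, by simp [List.nodup_range'],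
            ⟨?_, List.nodup_range'⟩, ?_⟩, ?_⟩
          · simp only [List.mem_cons, List.mem_append, List.mem_reverse,
              List.mem_range'_1]
            omega
          · simp only [List.mem_cons, List.mem_append, List.mem_reverse,
              List.mem_range'_1]
            omega
          · simp only [List.mem_range'_1]
            omega
          · intro m hm m' hm2
            simp only [List.mem_cons, List.mem_append, List.mem_reverse,
              List.mem_range'_1] at hm hm2
            omega
          · intro m hm m' hm2
            simp only [List.mem_cons, List.mem_append, List.mem_reverse,
              List.mem_range'_1] at hm hm2
            omega
        · intro m hm
          simp only [List.mem_append, List.mem_cons, List.mem_reverse,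
            List.mem_range'_1] at hm
          omega
        · simp [List.length_append, List.length_reverse, List.length_range']
          omega
    · -- case j = 1
      obtain rfl : j = 1 := by omega
      -- asc (1 .. i-1), cons form at v 1
      have hS6 : Good ((List.range' 1 (i-1)).map v) ((List.range' 2 (i-2)).map e) := by
        have h := hadj 1 (i-2) (by omega) (by omega)
        rw [show i-2+1 = i-1 by omega, show (1:ℕ)+1 = 2 from rfl] at h
        exact h
      rw [cons_asc v 1 (i-1) (by omega), show (1:ℕ)+1 = 2 from rfl,
        show i-1-1 = i-2 by omega] at hS6
      -- glue e 1 with [w]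
      have hA4 := Good.glue
        (show Good (([] : List (Fin n)) ++ [w]) [] from Good.single w) hwj hv1 hS6
      rw [List.nil_append, List.nil_append] at hA4
      -- glue e i with desc (i .. t-1)
      rw [snoc_desc v i (t-i) (by omega)] at hS1r
      have hA1 := Good.glue hS1r (hvmid i (by omega) (by omega)).2 hwi hA4
      -- canonical form
      have hAeq : ((List.range' i (t-i)).map v).reverse ++ w :: (List.range' 1 (i-1)).map v
          = ((List.range' (i+1) (t-i-1)).map v).reverse ++ v i :: w :: v 1 ::
            (List.range' 2 (i-2)).map v := by
        rw [snoc_desc v i (t-i) (by omega), cons_asc v 1 (i-1) (by omega),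
          show (1:ℕ)+1 = 2 from rfl, show i-1-1 = i-2 by omega]
        simp
      rw [← hAeq] at hA1
      apply core' E r t hu hrt ht3 hmax hcyc e he _ _ ?nd ?ln (v (t-1)) (v (i-1)) hvt
        ?hd ?lt ?ms hA1
      case nd =>
        have h := nodup_build v hvinj w hwU' ((List.range' i (t-i)).reverse)
          (List.range' 1 (i-1)) ?_ ?_
        · simpa [List.map_reverse] using h
        · rw [List.nodup_append]
          refine ⟨by simp [List.nodup_range'], List.nodup_range', ?_⟩
          intro m hm m' hm2
          simp only [List.mem_reverse, List.mem_range'_1] at hm hm2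
          omega
        · intro m hm
          simp only [List.mem_reverse, List.mem_append, List.mem_range'_1] at hm
          omega
      case ln => simp [List.length_append, List.length_reverse, List.length_map,
          List.length_range']; omega
      case hd =>
        rw [cons_desc v i (t-i) (by omega), show i+(t-i)-1 = t-1 by omega, List.cons_append]
        rfl
      case lt =>
        rw [snoc_asc v 1 (i-1) (by omega), show 1+(i-1)-1 = i-1 by omega]
        rw [show ((List.range' i (t-i)).map v).reverse ++ w ::
              ((List.range' 1 (i-1-1)).map v ++ [v (i-1)])
            = (((List.range' i (t-i)).map v).reverse ++ w ::
              (List.range' 1 (i-1-1)).map v) ++ [v (i-1)] from by simp]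
        exact List.getLast?_concat
      case ms =>
        apply hms ((List.range' (i+1) (t-1-i)).reverse ++ i :: 1 :: List.range' 2 (i-2))
        · simp [List.map_reverse]
        · rw [List.nodup_append, List.nodup_cons, List.nodup_cons]
          refine ⟨by simp [List.nodup_range'], ⟨?_, ?_, List.nodup_range'⟩, ?_⟩
          · simp only [List.mem_cons, List.mem_range'_1]
            omega
          · simp only [List.mem_cons, List.mem_range'_1]
            omega
          · intro m hm m' hm2
            simp only [List.mem_cons, List.mem_reverse, List.mem_range'_1] at hm hm2
            omega
        · intro m hm
          simp only [List.mem_append, List.mem_cons, List.mem_reverse,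
            List.mem_range'_1] at hm
          omega
        · simp [List.length_append, List.length_reverse, List.length_range']
          omega
  have claim2 : edgeNbhd E {v j} ≤
      (↑((List.range (t-1)).map fun s => e (s+1)) : Multiset (Finset (Fin n))) := by
    rcases Nat.lt_or_ge 1 j with hj2 | hj2'
    · -- case j ≥ 2
      -- last segment : desc (j .. i-1), cons form at v (i-1)
      have hS6 : Good (((List.range' j (i-j)).map v).reverse)
          (((List.range' (j+1) (i-1-j)).map e).reverse) := by
        have h := hadj j (i-1-j) (by omega) (by omega)
        rw [show i-1-j+1 = i-j by omega] at h
        exact h.reverse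
      rw [cons_desc v j (i-j) (by omega), show j+(i-j)-1 = i-1 by omega] at hS6
      -- glue e i with [w]
      have hB4 := Good.glue
        (show Good (([] : List (Fin n)) ++ [w]) [] from Good.single w) hwi
        (hvmid i (by omega) (by omega)).1 hS6
      rw [List.nil_append, List.nil_append] at hB4
      -- asc (1 .. j-1), snoc form at v (j-1)
      have hS3 : Good ((List.range' 1 (j-1)).map v) ((List.range' 2 (j-2)).map e) := by
        have h := hadj 1 (j-2) (by omega) (by omega)
        rw [show j-2+1 = j-1 by omega, show (1:ℕ)+1 = 2 from rfl] at h
        exact h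
      rw [snoc_asc v 1 (j-1) (by omega), show 1+(j-1)-1 = j-1 by omega,
        show j-1-1 = j-2 by omega] at hS3
      -- glue e j
      have hB3 := Good.glue hS3 (hvmid j (by omega) (by omega)).1 hwj hB4
      -- re-fuse and expose head v 1
      rw [show (List.range' 1 (j-2)).map v ++ v (j-1) :: w :: v (i-1) ::
            ((List.range' j (i-j-1)).map v).reverse
          = (List.range' 1 (j-1)).map v ++ w :: v (i-1) ::
            ((List.range' j (i-j-1)).map v).reverse from by
        rw [snoc_asc v 1 (j-1) (by omega), show 1+(j-1)-1 = j-1 by omega,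
          show j-1-1 = j-2 by omega]
        simp] at hB3
      rw [cons_asc v 1 (j-1) (by omega), show (1:ℕ)+1 = 2 from rfl,
        show j-1-1 = j-2 by omega, List.cons_append] at hB3
      -- glue e 1 with desc (i .. t-1)
      rw [snoc_desc v i (t-i) (by omega)] at hS1r
      have hB1 := Good.glue hS1r hvi hv1 hB3
      -- canonical form
      have hBeq : (((List.range' i (t-i)).map v).reverse ++ (List.range' 1 (j-1)).map v)
            ++ w :: ((List.range' j (i-j)).map v).reverse
          = ((List.range' (i+1) (t-i-1)).map v).reverse ++ v i :: v 1 ::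
            ((List.range' 2 (j-2)).map v ++ w :: v (i-1) ::
              ((List.range' j (i-j-1)).map v).reverse) := by
        rw [snoc_desc v i (t-i) (by omega), cons_asc v 1 (j-1) (by omega),
          cons_desc v j (i-j) (by omega)]
        rw [show (1:ℕ)+1 = 2 from rfl, show j-1-1 = j-2 by omega,
          show j+(i-j)-1 = i-1 by omega]
        simp
      rw [← hBeq] at hB1
      apply core' E r t hu hrt ht3 hmax hcyc e he _ _ ?nd ?ln (v (t-1)) (v j) hvt
        ?hd ?lt ?ms hB1
      case nd =>
        have h := nodup_build v hvinj w hwU'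
          ((List.range' i (t-i)).reverse ++ List.range' 1 (j-1))
          ((List.range' j (i-j)).reverse) ?_ ?_
        · simpa [List.map_reverse, List.map_append, List.append_assoc] using h
        · rw [List.nodup_append, List.nodup_append]
          refine ⟨⟨by simp [List.nodup_range'], List.nodup_range', ?_⟩,
            by simp [List.nodup_range'], ?_⟩ <;>
          · intro m hm m' hm2
            simp only [List.mem_reverse, List.mem_append, List.mem_range'_1] at hm hm2
            omega
        · intro m hm
          simp only [List.mem_reverse, List.mem_append, List.mem_range'_1] at hm
          omega
      case ln => simp [List.length_append, List.length_reverse, List.length_map,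
          List.length_range']; omega
      case hd =>
        rw [cons_desc v i (t-i) (by omega), show i+(t-i)-1 = t-1 by omega,
          List.cons_append, List.cons_append]
        rfl
      case lt =>
        rw [snoc_desc v j (i-j) (by omega)]
        rw [show (((List.range' i (t-i)).map v).reverse ++ (List.range' 1 (j-1)).map v)
              ++ w :: (((List.range' (j+1) (i-j-1)).map v).reverse ++ [v j])
            = ((((List.range' i (t-i)).map v).reverse ++ (List.range' 1 (j-1)).map v)
              ++ w :: ((List.range' (j+1) (i-j-1)).map v).reverse) ++ [v j] from by simp]
        exact List.getLast?_concat
      case ms =>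
        apply hms ((List.range' (i+1) (t-1-i)).reverse ++ 1 ::
          (List.range' 2 (j-2) ++ j :: i :: (List.range' (j+1) (i-1-j)).reverse))
        · simp [List.map_reverse]
        · rw [List.nodup_append, List.nodup_cons, List.nodup_append, List.nodup_cons,
            List.nodup_cons]
          refine ⟨by simp [List.nodup_range'], ⟨?_, List.nodup_range', ⟨?_, ?_,
            by simp [List.nodup_range']⟩, ?_⟩, ?_⟩
          · simp only [List.mem_append, List.mem_cons, List.mem_reverse,
              List.mem_range'_1]
            omega
          · simp only [List.mem_cons, List.mem_reverse, List.mem_range'_1]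
            omega
          · simp only [List.mem_reverse, List.mem_range'_1]
            omega
          · intro m hm m' hm2
            simp only [List.mem_cons, List.mem_reverse, List.mem_range'_1] at hm hm2
            omega
          · intro m hm m' hm2
            simp only [List.mem_cons, List.mem_append, List.mem_reverse,
              List.mem_range'_1] at hm hm2
            omega
        · intro m hm
          simp only [List.mem_append, List.mem_cons, List.mem_reverse,
            List.mem_range'_1] at hm
          omega
        · simp [List.length_append, List.length_reverse, List.length_range']
          omega
    · -- case j = 1
      obtain rfl : j = 1 := by omega
      -- last segment : desc (1 .. i-1), cons form at v (i-1)
      have hS6 : Good (((List.range' 1 (i-1)).map v).reverse)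
          (((List.range' 2 (i-2)).map e).reverse) := by
        have h := hadj 1 (i-2) (by omega) (by omega)
        rw [show i-2+1 = i-1 by omega, show (1:ℕ)+1 = 2 from rfl] at h
        exact h.reverse
      rw [cons_desc v 1 (i-1) (by omega), show 1+(i-1)-1 = i-1 by omega,
        show i-1-1 = i-2 by omega] at hS6
      -- glue e i with [w]
      have hB4 := Good.glue
        (show Good (([] : List (Fin n)) ++ [w]) [] from Good.single w) hwi
        (hvmid i (by omega) (by omega)).1 hS6
      rw [List.nil_append, List.nil_append] at hB4
      -- glue e 1 with desc (i .. t-1)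
      rw [snoc_desc v i (t-i) (by omega)] at hS1r
      have hB1 := Good.glue hS1r hvi hwj hB4
      -- canonical form
      have hBeq : ((List.range' i (t-i)).map v).reverse ++ w ::
            ((List.range' 1 (i-1)).map v).reverse
          = ((List.range' (i+1) (t-i-1)).map v).reverse ++ v i :: w :: v (i-1) ::
            ((List.range' 1 (i-2)).map v).reverse := by
        rw [snoc_desc v i (t-i) (by omega), cons_desc v 1 (i-1) (by omega),
          show 1+(i-1)-1 = i-1 by omega, show i-1-1 = i-2 by omega]
        simp
      rw [← hBeq] at hB1
      apply core' E r t hu hrt ht3 hmax hcyc e he _ _ ?nd ?ln (v (t-1)) (v 1) hvt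
        ?hd ?lt ?ms hB1
      case nd =>
        have h := nodup_build v hvinj w hwU' ((List.range' i (t-i)).reverse)
          ((List.range' 1 (i-1)).reverse) ?_ ?_
        · simpa [List.map_reverse] using h
        · rw [List.nodup_append]
          refine ⟨by simp [List.nodup_range'], by simp [List.nodup_range'], ?_⟩
          intro m hm m' hm2
          simp only [List.mem_reverse, List.mem_range'_1] at hm hm2
          omega
        · intro m hm
          simp only [List.mem_reverse, List.mem_append, List.mem_range'_1] at hm
          omega
      case ln => simp [List.length_append, List.length_reverse, List.length_map,
          List.length_range']; omega
      case hd =>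
        rw [cons_desc v i (t-i) (by omega), show i+(t-i)-1 = t-1 by omega, List.cons_append]
        rfl
      case lt =>
        rw [snoc_desc v 1 (i-1) (by omega), show (1:ℕ)+1 = 2 from rfl,
          show i-1-1 = i-2 by omega]
        rw [show ((List.range' i (t-i)).map v).reverse ++ w ::
              (((List.range' 2 (i-2)).map v).reverse ++ [v 1])
            = (((List.range' i (t-i)).map v).reverse ++ w ::
              ((List.range' 2 (i-2)).map v).reverse) ++ [v 1] from by simp]
        exact List.getLast?_concat
      case ms =>
        apply hms ((List.range' (i+1) (t-1-i)).reverse ++ 1 :: i ::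
          (List.range' 2 (i-2)).reverse)
        · simp [List.map_reverse]
        · rw [List.nodup_append, List.nodup_cons, List.nodup_cons]
          refine ⟨by simp [List.nodup_range'], ⟨?_, ?_, by simp [List.nodup_range']⟩, ?_⟩
          · simp only [List.mem_cons, List.mem_reverse, List.mem_range'_1]
            omega
          · simp only [List.mem_reverse, List.mem_range'_1]
            omega
          · intro m hm m' hm2
            simp only [List.mem_cons, List.mem_reverse, List.mem_range'_1] at hm hm2
            omega
        · intro m hm
          simp only [List.mem_append, List.mem_cons, List.mem_reverse,
            List.mem_range'_1] at hm
          omega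
        · simp [List.length_append, List.length_reverse, List.length_range']
          omega
  exact ⟨claim1, claim2⟩


theorem stmt15    (n r k t : ℕ) (hk : 3 ≤ k) (hrk : k ≤ r) (hn : r < n)
    (E : Multiset (Finset (Fin n))) (hu : MUniform E r) (hc : MConnected E)
    (hf : MBPFree E k)
    (ht : MHasBergePath E t) (hmax : ∀ s : ℕ, MHasBergePath E s → s ≤ t)
    (hcyc : ¬ MHasBergeCycle E t)
    (e : ℕ → Finset (Fin n)) (v : ℕ → Fin n)
    (he : (↑((List.range t).map fun i => e (i + 1)) : Multiset (Finset (Fin n))) ≤ E)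
    (hvinj : Set.InjOn v (Set.Icc 1 (t - 1)))
    (hv1 : v 1 ∈ e 1) (hvt : v (t - 1) ∈ e t)
    (hvmid : ∀ i : ℕ, 2 ≤ i → i ≤ t - 1 → v (i - 1) ∈ e i ∧ v i ∈ e i)
 :
    (∀ i j : ℕ, 1 ≤ j → j < i → i ≤ t - 1 → v i ∈ e 1 → v j ∈ e 1 →
        ((e i ∩ e j) \ (Finset.Icc 1 (t - 1)).image v).Nonempty →
        edgeNbhd E {v (i - 1)} ≤
          (↑((List.range (t - 1)).map fun i => e (i + 1)) : Multiset (Finset (Fin n))) ∧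
        edgeNbhd E {v j} ≤
          (↑((List.range (t - 1)).map fun i => e (i + 1)) : Multiset (Finset (Fin n)))) ∧
    (∀ i j : ℕ, 2 ≤ j → j < i → i ≤ t → v (i - 1) ∈ e t → v (j - 1) ∈ e t →
        ((e i ∩ e j) \ (Finset.Icc 1 (t - 1)).image v).Nonempty →
        edgeNbhd E {v (i - 1)} ≤
          (↑((List.range (t - 1)).map fun i => e (i + 2)) : Multiset (Finset (Fin n))) ∧
        edgeNbhd E {v j} ≤
          (↑((List.range (t - 1)).map fun i => e (i + 2)) : Multiset (Finset (Fin n)))) := by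
  have htk : t < k := by
    by_contra h
    push_neg at h
    exact hf (mhasPath_mono ht h)
  have hrt : t + 1 ≤ r := by omega
  constructor
  · intro i j h1 h2 h3 hvi hvj hw
    obtain ⟨w, hw'⟩ := hw
    rw [Finset.mem_sdiff, Finset.mem_inter] at hw'
    exact master E r t hu hrt hmax hcyc e v he hvinj hv1 hvt hvmid i j h1 h2 h3 hvi hvj
      w hw'.1.1 hw'.1.2 hw'.2
  · intro i j hj2 hji hit hvit hvjt hw
    have hti : 3 ≤ t := by omega
    obtain ⟨w, hw'⟩ := hw
    rw [Finset.mem_sdiff, Finset.mem_inter] at hw'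
    have H := master E r t hu hrt hmax hcyc (fun m => e (t+1-m)) (fun m => v (t-m))
      ?he' ?hvinj' ?hv1' ?hvt' ?hvmid' (t-j+1) (t-i+1) (by omega) (by omega) (by omega)
      ?hvi' ?hvj' w ?hwi' ?hwj' ?hwU'
    case he' =>
      have hlist : ((List.range t).map fun s => e (t+1-(s+1))) =
          ((List.range t).map fun s => e (s+1)).reverse := by
        apply List.ext_getElem
        · simp
        · intro s h1 h2
          simp only [List.getElem_map, List.getElem_range, List.getElem_reverse,
            List.length_map, List.length_range]
          congr 1
          simp only [List.length_map, List.length_range] at h1 h2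
          omega
      show (↑((List.range t).map fun s => e (t+1-(s+1))) : Multiset (Finset (Fin n))) ≤ E
      rw [hlist, Multiset.coe_reverse]
      exact he
    case hvinj' =>
      intro a ha b hb hab
      simp only [Set.mem_Icc] at ha hb
      have h := hvinj (show t-a ∈ Set.Icc 1 (t-1) from by
          simp only [Set.mem_Icc]; omega)
        (show t-b ∈ Set.Icc 1 (t-1) from by simp only [Set.mem_Icc]; omega) hab
      omega
    case hv1' =>
      show v (t-1) ∈ e (t+1-1)
      rw [show t+1-1 = t by omega]
      exact hvt
    case hvt' =>
      show v (t-(t-1)) ∈ e (t+1-t)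
      rw [show t-(t-1) = 1 by omega, show t+1-t = 1 by omega]
      exact hv1
    case hvmid' =>
      intro m hm2 hmt
      constructor
      · show v (t-(m-1)) ∈ e (t+1-m)
        rw [show t-(m-1) = t+1-m by omega]
        exact (hvmid (t+1-m) (by omega) (by omega)).2
      · show v (t-m) ∈ e (t+1-m)
        rw [show t-m = t+1-m-1 by omega]
        exact (hvmid (t+1-m) (by omega) (by omega)).1
    case hvi' =>
      show v (t-(t-j+1)) ∈ e (t+1-1)
      rw [show t-(t-j+1) = j-1 by omega, show t+1-1 = t by omega]
      exact hvjt
    case hvj' =>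
      show v (t-(t-i+1)) ∈ e (t+1-1)
      rw [show t-(t-i+1) = i-1 by omega, show t+1-1 = t by omega]
      exact hvit
    case hwi' =>
      show w ∈ e (t+1-(t-j+1))
      rw [show t+1-(t-j+1) = j by omega]
      exact hw'.1.2
    case hwj' =>
      show w ∈ e (t+1-(t-i+1))
      rw [show t+1-(t-i+1) = i by omega]
      exact hw'.1.1
    case hwU' =>
      intro hmem
      apply hw'.2
      obtain ⟨m, hm, hme⟩ := Finset.mem_image.1 hmem
      rw [Finset.mem_Icc] at hm
      exact Finset.mem_image.2 ⟨t-m, Finset.mem_Icc.2 ⟨by omega, by omega⟩, hme⟩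
    -- convert conclusions
    have hms2 : (↑((List.range (t-1)).map fun s => e (t+1-(s+1))) :
        Multiset (Finset (Fin n))) = ↑((List.range (t-1)).map fun s => e (s+2)) := by
      have hlist : ((List.range (t-1)).map fun s => e (t+1-(s+1))) =
          ((List.range (t-1)).map fun s => e (s+2)).reverse := by
        apply List.ext_getElem
        · simp
        · intro s h1 h2
          simp only [List.getElem_map, List.getElem_range, List.getElem_reverse,
            List.length_map, List.length_range]
          congr 1
          simp only [List.length_map, List.length_range] at h1 h2
          omega
      rw [hlist, Multiset.coe_reverse]
    obtain ⟨H1, H2⟩ := H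
    rw [show t-(t-j+1-1) = j by omega, hms2] at H1
    rw [show t-(t-i+1) = i-1 by omega, hms2] at H2
    exact ⟨H2, H1⟩


end BergeM
end

section
/- Under the Setup, assume additionally that every hyperedge of H has multiplicity at most m, and that d_1, d_2 ≥ 1 are integers with d_1 + d_2 ≤ m+1, d_1 + 1 ≤ t and t − d_2 ≥ 1, such that the hyperedges e_1,…,e_{d_1} all have the same underlying vertex set, which differs from the underlying vertex set of e_{d_1+1}, and the hyperedges e_t, e_{t−1},…,e_{t−d_2+1} all have the same underlying vertex set, which differs from the underlying vertex set of e_{t−d_2}. If e_1 ∩ U = {v_1,…,v_{d_1}} and e_t ∩ U = {v_{t−d_2},…,v_{t−1}}, then either |N_H((e_1 ∪ e_t) ∖ {v_{d_1}, v_{t−d_2}})| ≤ m+1, or there exists a set S of vertices of H with |S| ≥ 2r−1 and N_H(S) ⊆ F. -/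
namespace BergeM

section Aux

variable {n : ℕ}

/-- list-based Berge path predicate -/
def LP : Fin n → List (Fin n) → List (Finset (Fin n)) → Prop
  | _, [], [] => True
  | a, b :: V, g :: Es => a ∈ g ∧ b ∈ g ∧ LP b V Es
  | _, [], _ :: _ => False
  | _, _ :: _, [] => False

lemma LP_length : ∀ {a : Fin n} {V : List (Fin n)} {Es : List (Finset (Fin n))},
    LP a V Es → V.length = Es.length := by
  intro a V
  induction V generalizing a with
  | nil => intro Es h; cases Es with
    | nil => rfl
    | cons g Es => exact absurd h (by simp [LP])
  | cons b V ih =>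
    intro Es h
    cases Es with
    | nil => exact absurd h (by simp [LP])
    | cons g Es =>
      obtain ⟨-, -, h3⟩ := h
      simpa using ih h3

lemma LP_append : ∀ {a b : Fin n} {V1 V2 : List (Fin n)} {Es1 Es2 : List (Finset (Fin n))},
    LP a V1 Es1 → LP b V2 Es2 → (a :: V1).getLast? = some b →
    LP a (V1 ++ V2) (Es1 ++ Es2) := by
  intro a b V1
  induction V1 generalizing a with
  | nil =>
    intro V2 Es1 Es2 h1 h2 hb
    cases Es1 with
    | nil =>
      have : a = b := by simpa using hb
      subst this; simpa using h2
    | cons g Es => exact absurd h1 (by simp [LP])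
  | cons x V1 ih =>
    intro V2 Es1 Es2 h1 h2 hb
    cases Es1 with
    | nil => exact absurd h1 (by simp [LP])
    | cons g Es1 =>
      obtain ⟨ha, hx, h3⟩ := h1
      refine ⟨ha, hx, ih h3 h2 ?_⟩
      rw [← hb, List.getLast?_cons_cons]

lemma getLast_eq_of_getLast? {α : Type*} {L : List α} {x : α} (h : L ≠ [])
    (hx : L.getLast? = some x) : L.getLast h = x := by
  rw [List.getLast?_eq_getLast h] at hx
  exact Option.some.inj hx

lemma LP_clique {c : Finset (Fin n)} : ∀ {a : Fin n} {V : List (Fin n)} {Es : List (Finset (Fin n))},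
    V.length = Es.length → a ∈ c → (∀ x ∈ V, x ∈ c) → (∀ g ∈ Es, g = c) →
    LP a V Es := by
  intro a V
  induction V generalizing a with
  | nil => intro Es hlen _ _ _; cases Es with
    | nil => trivial
    | cons g Es => simp at hlen
  | cons b V ih =>
    intro Es hlen ha hV hEs
    cases Es with
    | nil => simp at hlen
    | cons g Es =>
      have hg : g = c := hEs g (by simp)
      subst hg
      exact ⟨ha, hV b (by simp), ih (by simpa using hlen) (hV b (by simp))
        (fun x hx => hV x (by simp [hx])) (fun g hg => hEs g (by simp [hg]))⟩

lemma LP_get : ∀ {a : Fin n} {V : List (Fin n)} {Es : List (Finset (Fin n))},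
    LP a V Es → ∀ (i : ℕ) (hi : i < Es.length) (h1 : i < (a :: V).length)
    (h2 : i + 1 < (a :: V).length),
    (a :: V)[i] ∈ Es[i] ∧ (a :: V)[i + 1] ∈ Es[i] := by
  intro a V
  induction V generalizing a with
  | nil => intro Es h i hi h1 h2; simp at h2
  | cons b V ih =>
    intro Es h i hi h1 h2
    cases Es with
    | nil => exact absurd h (by simp [LP])
    | cons g Es =>
      obtain ⟨ha, hb, h3⟩ := h
      cases i with
      | zero => simpa using ⟨ha, hb⟩
      | succ j =>
        have := ih h3 j (by simpa using hi) (by simpa using Nat.lt_of_succ_lt_succ h1)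
          (by simpa using Nat.lt_of_succ_lt_succ h2)
        simpa using this

lemma ofFn_get_cast {α : Type*} (l : List α) (k : ℕ) (h : k = l.length) :
    List.ofFn (fun i : Fin k => l.get (Fin.cast h i)) = l := by
  subst h
  exact List.ofFn_get l

variable {E : Multiset (Finset (Fin n))}

lemma toPath {a : Fin n} {V : List (Fin n)} {Es : List (Finset (Fin n))}
    (h : LP a V Es) (hnd : (a :: V).Nodup) (hE : (↑Es : Multiset (Finset (Fin n))) ≤ E) :
    MHasBergePath E Es.length := by
  have hlen := LP_length h
  have hc : Es.length + 1 = (a :: V).length := by simp [hlen]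
  refine ⟨fun i => (a :: V).get (Fin.cast hc i), fun i => Es.get (Fin.cast rfl i), ?_, ?_, ?_⟩
  · exact (List.nodup_iff_injective_get.mp hnd).comp fun i j hij => by
      simpa [Fin.ext_iff] using congrArg Fin.val hij
  · rw [ofFn_get_cast Es Es.length rfl]; exact hE
  · intro i
    have := LP_get h i.val i.isLt (by simp only [List.length_cons, hlen]; omega) (by simp only [List.length_cons, hlen]; omega)
    simpa [List.get_eq_getElem] using this

lemma toCycle {a : Fin n} {V : List (Fin n)} {Es : List (Finset (Fin n))}
    {g : Finset (Fin n)}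
    (h : LP a V Es) (hnd : (a :: V).Nodup) (hag : a ∈ g)
    (hlg : (a :: V).getLast (by simp) ∈ g)
    (hE : (↑(Es ++ [g]) : Multiset (Finset (Fin n))) ≤ E) :
    MHasBergeCycle E (V.length + 1) := by
  have hlen := LP_length h
  have hc : V.length + 1 = (a :: V).length := by simp
  have hc2 : V.length + 1 = (Es ++ [g]).length := by simp [hlen]
  refine ⟨fun i => (a :: V).get (Fin.cast hc i), fun i => (Es ++ [g]).get (Fin.cast hc2 i),
    ?_, ?_, ?_⟩
  · exact (List.nodup_iff_injective_get.mp hnd).comp fun i j hij => by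
      simpa [Fin.ext_iff] using congrArg Fin.val hij
  · rw [ofFn_get_cast (Es ++ [g]) (V.length + 1) hc2]; exact hE
  · intro i
    have hiv : i.val < V.length + 1 := i.isLt
    dsimp only
    by_cases hi : i.val < Es.length
    · have hmod : (i.val + 1) % (V.length + 1) = i.val + 1 :=
        Nat.mod_eq_of_lt (by omega)
      have hget := LP_get h i.val hi (by simp only [List.length_cons, hlen]; omega) (by simp only [List.length_cons, hlen]; omega)
      constructor
      · simpa [List.get_eq_getElem, List.getElem_append_left hi] using hget.1
      · simp only [List.get_eq_getElem, Fin.coe_cast, hmod]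
        simpa [List.getElem_append_left hi] using hget.2
    · have hieq : i.val = Es.length := by omega
      have hgetg : (Es ++ [g]).get (Fin.cast hc2 i) = g := by
        simp [List.get_eq_getElem]
        rw [List.getElem_concat_length hieq]
      have hmod : (i.val + 1) % (V.length + 1) = 0 := by
        have : i.val + 1 = V.length + 1 := by omega
        simp [this]
      constructor
      · rw [hgetg]
        have : (a :: V).get (Fin.cast hc i) = (a :: V).getLast (by simp) := by
          rw [List.getLast_eq_getElem]
          simp only [List.get_eq_getElem, Fin.coe_cast, List.length_cons,
            Nat.add_sub_cancel]
          congr 1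
          omega
        rw [this]; exact hlg
      · rw [hgetg]
        simp only [List.get_eq_getElem, Fin.coe_cast, hmod]
        simpa using hag

lemma truncate {s s' : ℕ} (h : MHasBergePath E s) (hss : s' ≤ s) : MHasBergePath E s' := by
  obtain ⟨v, f, hinj, hof, hcond⟩ := h
  refine ⟨fun i => v (Fin.castLE (Nat.succ_le_succ hss) i), fun i => f (Fin.castLE hss i),
    hinj.comp (Fin.castLE_injective _), ?_, ?_⟩
  · have : List.ofFn (fun i : Fin s' => f (Fin.castLE hss i)) = (List.ofFn f).take s' := by
      apply List.ext_getElem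
      · simp [hss]
      · intro i h1 h2
        simp
    rw [this]
    exact le_trans (Multiset.coe_le.mpr ((List.take_sublist _ _).subperm)) hof
  · intro i
    have := hcond (Fin.castLE hss i)
    constructor
    · convert this.1 using 2; exact Fin.ext rfl
    · convert this.2 using 2; exact Fin.ext rfl

end Aux

set_option maxHeartbeats 1000000 in
theorem stmt16    (n r k t : ℕ) (hk : 3 ≤ k) (hrk : k ≤ r) (hn : r < n)
    (E : Multiset (Finset (Fin n))) (hu : MUniform E r) (hc : MConnected E)
    (hf : MBPFree E k)
    (ht : MHasBergePath E t) (hmax : ∀ s : ℕ, MHasBergePath E s → s ≤ t)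
    (hcyc : ¬ MHasBergeCycle E t)
    (e : ℕ → Finset (Fin n)) (v : ℕ → Fin n)
    (he : (↑((List.range t).map fun i => e (i + 1)) : Multiset (Finset (Fin n))) ≤ E)
    (hvinj : Set.InjOn v (Set.Icc 1 (t - 1)))
    (hv1 : v 1 ∈ e 1) (hvt : v (t - 1) ∈ e t)
    (hvmid : ∀ i : ℕ, 2 ≤ i → i ≤ t - 1 → v (i - 1) ∈ e i ∧ v i ∈ e i)
    (m d1 d2 : ℕ)
    (hmult : ∀ f : Finset (Fin n), E.count f ≤ m)
    (hd1 : 1 ≤ d1) (hd2 : 1 ≤ d2) (hd12 : d1 + d2 ≤ m + 1)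
    (hd1t : d1 + 1 ≤ t) (hd2t : 1 ≤ t - d2)
    (he1 : ∀ i : ℕ, 1 ≤ i → i ≤ d1 → e i = e 1) (hne1 : e (d1 + 1) ≠ e 1)
    (het : ∀ i : ℕ, t - d2 + 1 ≤ i → i ≤ t → e i = e t) (hnet : e (t - d2) ≠ e t)
    (hU1 : e 1 ∩ (Finset.Icc 1 (t - 1)).image v = (Finset.Icc 1 d1).image v)
    (hUt : e t ∩ (Finset.Icc 1 (t - 1)).image v = (Finset.Icc (t - d2) (t - 1)).image v) :
    Multiset.card (edgeNbhd E ((e 1 ∪ e t) \ {v d1, v (t - d2)})) ≤ m + 1 ∨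
    ∃ S : Finset (Fin n), 2 * r - 1 ≤ S.card ∧
      edgeNbhd E S ≤
        (↑((List.range t).map fun i => e (i + 1)) : Multiset (Finset (Fin n))) := by
  classical
  -- ===== basic arithmetic facts =====
  have ht2 : 2 ≤ t := by omega
  have htk : t < k := by
    by_contra hkt
    exact hf (truncate ht (by omega))
  have htr : t + 1 ≤ r := by omega
  have hdd : d1 ≤ t - d2 := by
    by_contra hcon
    push_neg at hcon
    have h1 : e (d1 + 1) = e t := het (d1 + 1) (by omega) (by omega)
    have h2 : e d1 = e t := het d1 (by omega) (by omega)
    have h3 : e d1 = e 1 := he1 d1 (by omega) (by omega)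
    exact hne1 (by rw [h1, ← h2, h3])
  -- ===== the path edge list =====
  set Pl : List (Finset (Fin n)) := (List.range' 1 t).map e with hPldef
  have hPl_eq : (List.range t).map (fun i => e (i + 1)) = Pl := by
    rw [hPldef, List.range'_eq_map_range, List.map_map]
    congr 1
    funext i
    simp [Nat.add_comm]
  have he' : (↑Pl : Multiset (Finset (Fin n))) ≤ E := by rw [← hPl_eq]; exact he
  have hlenPl : Pl.length = t := by simp [hPldef]
  -- ===== vertex set U =====
  set UF : Finset (Fin n) := (Finset.Icc 1 (t - 1)).image v with hUFdef
  have hvUF : ∀ j, 1 ≤ j → j ≤ t - 1 → v j ∈ UF := by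
    intro j h1 h2
    exact Finset.mem_image.mpr ⟨j, Finset.mem_Icc.mpr ⟨h1, h2⟩, rfl⟩
  have hfresh : ∀ x : Fin n, x ∉ UF → ∀ j, 1 ≤ j → j ≤ t - 1 → x ≠ v j := by
    intro x hx j h1 h2 heq
    exact hx (heq ▸ hvUF j h1 h2)
  have hvinj' : ∀ i j, 1 ≤ i → i ≤ t - 1 → 1 ≤ j → j ≤ t - 1 → v i = v j → i = j := by
    intro i j h1 h2 h3 h4 h
    exact hvinj (Set.mem_Icc.mpr ⟨h1, h2⟩) (Set.mem_Icc.mpr ⟨h3, h4⟩) h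
  have hve1 : ∀ j, 1 ≤ j → j ≤ d1 → v j ∈ e 1 := by
    intro j h1 h2
    have : v j ∈ e 1 ∩ UF := by
      rw [hUFdef, hU1]
      exact Finset.mem_image.mpr ⟨j, Finset.mem_Icc.mpr ⟨h1, h2⟩, rfl⟩
    exact (Finset.mem_inter.mp this).1
  have hvet : ∀ j, t - d2 ≤ j → j ≤ t - 1 → v j ∈ e t := by
    intro j h1 h2
    have : v j ∈ e t ∩ UF := by
      rw [hUFdef, hUt]
      exact Finset.mem_image.mpr ⟨j, Finset.mem_Icc.mpr ⟨h1, h2⟩, rfl⟩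
    exact (Finset.mem_inter.mp this).1
  have hie1 : ∀ j, 1 ≤ j → j ≤ t - 1 → v j ∈ e 1 → j ≤ d1 := by
    intro j h1 h2 hj
    have hm : v j ∈ (Finset.Icc 1 d1).image v := by
      rw [← hU1]
      exact Finset.mem_inter.mpr ⟨hj, hvUF j h1 h2⟩
    obtain ⟨i, hi, hiv⟩ := Finset.mem_image.mp hm
    rw [Finset.mem_Icc] at hi
    have := hvinj' i j hi.1 (by omega) h1 h2 hiv
    omega
  have hiet : ∀ j, 1 ≤ j → j ≤ t - 1 → v j ∈ e t → t - d2 ≤ j := by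
    intro j h1 h2 hj
    have hm : v j ∈ (Finset.Icc (t - d2) (t - 1)).image v := by
      rw [← hUt]
      exact Finset.mem_inter.mpr ⟨hj, hvUF j h1 h2⟩
    obtain ⟨i, hi, hiv⟩ := Finset.mem_image.mp hm
    rw [Finset.mem_Icc] at hi
    have := hvinj' i j (by omega) (by omega) h1 h2 hiv
    omega
  have hE1 : e 1 ∈ E := by
    refine Multiset.mem_of_le he' ?_
    rw [hPldef]
    exact Multiset.mem_coe.mpr (List.mem_map.mpr ⟨1, by rw [List.mem_range'_1]; omega, rfl⟩)
  have hEt : e t ∈ E := by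
    refine Multiset.mem_of_le he' ?_
    rw [hPldef]
    exact Multiset.mem_coe.mpr (List.mem_map.mpr ⟨t, by rw [List.mem_range'_1]; omega, rfl⟩)
  have hUFcard : UF.card ≤ t - 1 := by
    refine le_trans Finset.card_image_le ?_
    simp [Nat.card_Icc]
  have hpick : ∀ c : Finset (Fin n), c ∈ E → ∀ x : Fin n, ∃ u, u ∈ c ∧ u ∉ UF ∧ u ≠ x := by
    intro c hc x
    have hcr : c.card = r := hu c hc
    have h1 : (UF ∪ {x}).card ≤ t := by
      refine le_trans (Finset.card_union_le _ _) ?_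
      simp only [Finset.card_singleton]
      omega
    have h2 : 0 < (c \ (UF ∪ {x})).card := by
      have := Finset.le_card_sdiff (UF ∪ {x}) c
      omega
    obtain ⟨u, hu'⟩ := Finset.card_pos.mp h2
    rw [Finset.mem_sdiff, Finset.mem_union] at hu'
    exact ⟨u, hu'.1, fun h => hu'.2 (Or.inl h), fun h => hu'.2 (Or.inr (by simp [h]))⟩
  -- ===== range' counting =====
  have hRcount : ∀ (x a b : ℕ),
      Multiset.count x (↑(List.range' a b) : Multiset ℕ) = if a ≤ x ∧ x < a + b then 1 else 0 := by
    intro x a b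
    induction b generalizing a with
    | zero =>
      have hno : ¬(a ≤ x ∧ x < a) := by omega
      simp [hno]
    | succ p ih =>
      rw [List.range'_succ, ← Multiset.cons_coe, Multiset.count_cons, ih (a + 1)]
      split_ifs <;> omega
  have hEeq : ∀ K : List ℕ, (↑K : Multiset ℕ) = (↑(List.range' 1 t) : Multiset ℕ) →
      (↑(K.map e) : Multiset (Finset (Fin n))) = (↑Pl : Multiset (Finset (Fin n))) := by
    intro K hK
    rw [hPldef, ← Multiset.map_coe, ← Multiset.map_coe, hK]
  -- ===== nodup master =====
  have hmaster : ∀ (V : List (Fin n)) (x y : Fin n) (J : List ℕ),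
      (↑V : Multiset (Fin n)) = x ::ₘ y ::ₘ (↑(J.map v) : Multiset (Fin n)) →
      x ∉ UF → y ∉ UF → x ≠ y → J.Nodup → (∀ i ∈ J, 1 ≤ i ∧ i ≤ t - 1) → V.Nodup := by
    intro V x y J hVeq hx hy hxy hJ hJb
    rw [← Multiset.coe_nodup, hVeq, Multiset.nodup_cons, Multiset.nodup_cons]
    refine ⟨?_, ?_, ?_⟩
    · rw [Multiset.mem_cons]
      push_neg
      refine ⟨hxy, ?_⟩
      rw [Multiset.mem_coe, List.mem_map]
      rintro ⟨i, hi, heq⟩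
      exact hfresh x hx i (hJb i hi).1 (hJb i hi).2 heq.symm
    · rw [Multiset.mem_coe, List.mem_map]
      rintro ⟨i, hi, heq⟩
      exact hfresh y hy i (hJb i hi).1 (hJb i hi).2 heq.symm
    · rw [Multiset.coe_nodup]
      exact List.Nodup.map_on
        (fun i hi j hj hij => hvinj' i j (hJb i hi).1 (hJb i hi).2 (hJb j hj).1 (hJb j hj).2 hij)
        hJ
  -- ===== chain builders =====
  have hasc : ∀ q s, 1 ≤ s → s + q ≤ t - 1 →
      LP (v s) ((List.range' (s + 1) q).map v) ((List.range' (s + 1) q).map e) := by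
    intro q
    induction q with
    | zero => intro s _ _; exact trivial
    | succ p ih =>
      intro s hs hq
      rw [List.range'_succ, List.map_cons, List.map_cons]
      obtain ⟨hm1, hm2⟩ := hvmid (s + 1) (by omega) (by omega)
      simp only [Nat.add_sub_cancel] at hm1
      exact ⟨hm1, hm2, ih (s + 1) (by omega) (by omega)⟩
  have hdesc : ∀ q b, 1 ≤ b → b + q ≤ t - 1 →
      LP (v (b + q)) (((List.range' b q).map v).reverse) (((List.range' (b + 1) q).map e).reverse) := by
    intro q
    induction q with
    | zero => intro b _ _; exact trivial
    | succ p ih =>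
      intro b hb hq
      rw [List.range'_concat, List.range'_concat, List.map_append, List.map_append,
        List.reverse_append, List.reverse_append]
      simp only [one_mul, List.map_singleton, List.reverse_singleton, List.singleton_append]
      obtain ⟨hm1, hm2⟩ := hvmid (b + p + 1) (by omega) (by omega)
      simp only [Nat.add_sub_cancel] at hm1
      have h1 : b + (p + 1) = b + 1 + p := by omega
      refine ⟨?_, ?_, ih b hb (by omega)⟩
      · rw [h1] at *
        exact (by rw [show b + 1 + p = b + p + 1 from by omega]; exact hm2)
      · rw [show b + 1 + p = b + p + 1 from by omega]
        exact hm1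
  -- getLast? helpers
  have hlastQ : ∀ (L : List (Fin n)) (x : Fin n), (L ++ [x]).getLast? = some x := by
    intro L x
    exact List.getLast?_concat
  have hsv_concat : ∀ a q, (List.range' a (q + 1)).map v = (List.range' a q).map v ++ [v (a + q)] := by
    intro a q
    rw [List.range'_concat]
    simp
  have hlast_asc : ∀ s q, ((v s) :: (List.range' (s + 1) q).map v).getLast? = some (v (s + q)) := by
    intro s q
    cases q with
    | zero => simp
    | succ p =>
      rw [hsv_concat (s + 1) p, ← List.cons_append, hlastQ]
      congr 2
      omega
  have hlast_desc : ∀ b q, ((v (b + q)) :: ((List.range' b q).map v).reverse).getLast? = some (v b) := by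
    intro b q
    cases q with
    | zero => simp
    | succ p =>
      rw [List.range'_succ, List.map_cons, List.reverse_cons, ← List.cons_append, hlastQ]
  -- ===== KEY lemma =====
  have key : ∀ w : Fin n, ∀ V Es, LP w V Es → (w :: V).Nodup →
      (↑Es : Multiset (Finset (Fin n))) = (↑Pl : Multiset (Finset (Fin n))) →
      ∀ f : Finset (Fin n), w ∈ f → (↑Pl : Multiset (Finset (Fin n))) + {f} ≤ E → False := by
    intro w V Es hlp hnd hms f hwf hPf
    have hlenE : Es.length = t := by
      have hc := congrArg Multiset.card hms
      simp only [Multiset.coe_card] at hc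
      rw [hc, hlenPl]
    have hlenV : V.length = t := by rw [LP_length hlp, hlenE]
    by_cases hsub : ∀ y ∈ f, y ∈ (w :: V)
    · have hfE : f ∈ E := Multiset.mem_of_le hPf (by simp)
      have hfr : f.card = r := hu f hfE
      have hfin : f = (w :: V).toFinset := by
        apply Finset.eq_of_subset_of_card_le
        · intro y hy
          exact List.mem_toFinset.mpr (hsub y hy)
        · rw [List.toFinset_card_of_nodup hnd]
          simp only [List.length_cons, hlenV]
          omega
      cases V with
      | nil => simp at hlenV; omega
      | cons b V' =>
        cases Es with
        | nil => exact absurd hlp (by simp [LP])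
        | cons g Es' =>
          obtain ⟨hwg, hbg, hlp'⟩ := hlp
          have hndb : (b :: V').Nodup := (List.nodup_cons.mp hnd).2
          have hbf : b ∈ f := by rw [hfin]; simp
          have hlf : (b :: V').getLast (by simp) ∈ f := by
            rw [hfin]
            have hmem := List.getLast_mem (l := b :: V') (by simp)
            exact List.mem_toFinset.mpr (List.mem_cons_of_mem w hmem)
          have hEle : (↑(Es' ++ [f]) : Multiset (Finset (Fin n))) ≤ E := by
            rw [← Multiset.coe_add]
            refine le_trans ?_ hPf
            rw [← hms, ← Multiset.cons_coe]
            exact add_le_add (Multiset.le_cons_self _ _) le_rfl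
          have hcycle := toCycle (E := E) hlp' hndb hbf hlf hEle
          have hVlen : V'.length + 1 = t := by simpa using hlenV
          rw [hVlen] at hcycle
          exact hcyc hcycle
    · push_neg at hsub
      obtain ⟨y, hyf, hynV⟩ := hsub
      have hlp2 : LP y (w :: V) (f :: Es) := ⟨hyf, hwf, hlp⟩
      have hnd2 : (y :: w :: V).Nodup := List.nodup_cons.mpr ⟨hynV, hnd⟩
      have hE2 : (↑(f :: Es) : Multiset (Finset (Fin n))) ≤ E := by
        rw [← Multiset.cons_coe, hms]
        calc (f ::ₘ (↑Pl : Multiset (Finset (Fin n))))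
            = (↑Pl : Multiset (Finset (Fin n))) + {f} := by
              rw [← Multiset.singleton_add, add_comm]
        _ ≤ E := hPf
      have hlong := toPath (E := E) hlp2 hnd2 hE2
      rw [show (f :: Es).length = t + 1 by simp [hlenE]] at hlong
      have := hmax (t + 1) hlong
      omega
  -- count consequence of key
  have keycount : ∀ S : Finset (Fin n),
      (∀ w ∈ S, ∃ V Es, LP w V Es ∧ (w :: V).Nodup ∧
        (↑Es : Multiset (Finset (Fin n))) = (↑Pl : Multiset (Finset (Fin n)))) →
      edgeNbhd E S ≤ (↑Pl : Multiset (Finset (Fin n))) := by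
    intro S hS
    rw [Multiset.le_iff_count]
    intro f
    rw [edgeNbhd, Multiset.count_filter]
    split_ifs with hfS
    · obtain ⟨w, hw⟩ := hfS
      rw [Finset.mem_inter] at hw
      by_contra hcnt
      push_neg at hcnt
      obtain ⟨V, Es, hlp, hnd, hms⟩ := hS w hw.2
      refine key w V Es hlp hnd hms f hw.1 ?_
      rw [Multiset.le_iff_count]
      intro g
      rw [Multiset.count_add]
      by_cases hg : g = f
      · subst hg
        rw [Multiset.count_singleton_self]
        omega
      · rw [Multiset.count_singleton, if_neg hg, Nat.add_zero]
        exact Multiset.le_iff_count.mp he' g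
    · exact Nat.zero_le _
  -- ===== good vertex constructions =====
  have goodA : ∀ w z : Fin n, w ∈ e 1 → w ∉ UF → z ∈ e t → z ∉ UF → w ≠ z →
      ∃ V Es, LP w V Es ∧ (w :: V).Nodup ∧
        (↑Es : Multiset (Finset (Fin n))) = (↑Pl : Multiset (Finset (Fin n))) := by
    intro w z hw hwU hz hzU hwz
    have hA : LP (v 1) ((List.range' 2 (t - 2)).map v) ((List.range' 2 (t - 2)).map e) :=
      hasc (t - 2) 1 le_rfl (by omega)
    have hlA : ((v 1) :: (List.range' 2 (t - 2)).map v).getLast? = some (v (1 + (t - 2))) :=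
      hlast_asc 1 (t - 2)
    rw [show 1 + (t - 2) = t - 1 from by omega] at hlA
    have h3 : LP (v (t - 1)) [z] [e t] := ⟨hvt, hz, trivial⟩
    have h23 := LP_append hA h3 hlA
    have h1 : LP w [v 1] [e 1] := ⟨hw, hv1, trivial⟩
    have hlp := LP_append h1 h23 (by simp)
    refine ⟨_, _, hlp, ?_, ?_⟩
    · apply hmaster _ w z (1 :: List.range' 2 (t - 2)) ?_ hwU hzU hwz ?_ ?_
      · refine Multiset.ext.mpr fun a => ?_
        simp only [List.map_cons, ← Multiset.cons_coe, ← Multiset.coe_add, Multiset.count_add,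
          Multiset.count_cons, Multiset.coe_nil, Multiset.count_zero]
        split_ifs <;> omega
      · refine List.nodup_cons.mpr ⟨?_, List.nodup_range'⟩
        rw [List.mem_range'_1]
        omega
      · intro i hi
        rcases List.mem_cons.mp hi with rfl | h
        · omega
        · rw [List.mem_range'_1] at h
          omega
    · rw [show [e 1] ++ ((List.range' 2 (t - 2)).map e ++ [e t])
          = (1 :: (List.range' 2 (t - 2) ++ [t])).map e from by simp]
      refine hEeq _ ?_
      refine Multiset.ext.mpr fun a => ?_
      simp only [← Multiset.cons_coe, ← Multiset.coe_add, Multiset.count_add,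
        Multiset.count_cons, Multiset.coe_nil, Multiset.count_zero, hRcount]
      split_ifs <;> omega
  have goodA' : ∀ w z : Fin n, w ∈ e t → w ∉ UF → z ∈ e 1 → z ∉ UF → w ≠ z →
      ∃ V Es, LP w V Es ∧ (w :: V).Nodup ∧
        (↑Es : Multiset (Finset (Fin n))) = (↑Pl : Multiset (Finset (Fin n))) := by
    intro w z hw hwU hz hzU hwz
    have hD : LP (v (t - 1)) (((List.range' 1 (t - 2)).map v).reverse)
        (((List.range' 2 (t - 2)).map e).reverse) := by
      have h := hdesc (t - 2) 1 le_rfl (by omega)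
      rwa [show 1 + (t - 2) = t - 1 from by omega] at h
    have hlD : ((v (t - 1)) :: ((List.range' 1 (t - 2)).map v).reverse).getLast?
        = some (v 1) := by
      have h := hlast_desc 1 (t - 2)
      rwa [show 1 + (t - 2) = t - 1 from by omega] at h
    have h3 : LP (v 1) [z] [e 1] := ⟨hv1, hz, trivial⟩
    have h23 := LP_append hD h3 hlD
    have h1 : LP w [v (t - 1)] [e t] := ⟨hw, hvt, trivial⟩
    have hlp := LP_append h1 h23 (by simp)
    refine ⟨_, _, hlp, ?_, ?_⟩
    · apply hmaster _ w z ((t - 1) :: List.range' 1 (t - 2)) ?_ hwU hzU hwz ?_ ?_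
      · refine Multiset.ext.mpr fun a => ?_
        simp only [List.map_cons, ← Multiset.cons_coe, ← Multiset.coe_add, Multiset.coe_reverse,
          Multiset.count_add, Multiset.count_cons, Multiset.coe_nil, Multiset.count_zero]
        split_ifs <;> omega
      · refine List.nodup_cons.mpr ⟨?_, List.nodup_range'⟩
        rw [List.mem_range'_1]
        omega
      · intro i hi
        rcases List.mem_cons.mp hi with rfl | h
        · omega
        · rw [List.mem_range'_1] at h
          omega
    · rw [show [e t] ++ (((List.range' 2 (t - 2)).map e).reverse ++ [e 1])
          = (t :: ((List.range' 2 (t - 2)).reverse ++ [1])).map e from by simp]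
      refine hEeq _ ?_
      refine Multiset.ext.mpr fun a => ?_
      simp only [← Multiset.cons_coe, ← Multiset.coe_add, Multiset.coe_reverse, Multiset.count_add,
        Multiset.count_cons, Multiset.coe_nil, Multiset.count_zero, hRcount]
      split_ifs <;> omega
  have goodB : ∀ j, 1 ≤ j → j ≤ d1 - 1 →
      ∃ V Es, LP (v j) V Es ∧ (v j :: V).Nodup ∧
        (↑Es : Multiset (Finset (Fin n))) = (↑Pl : Multiset (Finset (Fin n))) := by
    intro j hj1 hj2
    obtain ⟨z, hz, hzU, -⟩ := hpick (e t) hEt (v 1)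
    obtain ⟨u, hu', huU, huz⟩ := hpick (e 1) hE1 z
    -- clique block from v j to v d1
    set BV : List (Fin n) := u :: ((List.range' 1 (j - 1)).map v ++
      ((List.range' (j + 1) (d1 - 1 - j)).map v ++ [v d1])) with hBVdef
    have hblock : LP (v j) BV ((List.range' 1 d1).map e) := by
      refine LP_clique ?_ (hve1 j hj1 (by omega)) ?_ ?_
      · rw [hBVdef]
        simp only [List.length_cons, List.length_append, List.length_map, List.length_range',
          List.length_singleton, List.length_nil]
        omega
      · intro x hx
        rw [hBVdef] at hx
        rcases List.mem_cons.mp hx with rfl | hx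
        · exact hu'
        · rcases List.mem_append.mp hx with hx | hx
          · obtain ⟨i, hi, rfl⟩ := List.mem_map.mp hx
            rw [List.mem_range'_1] at hi
            exact hve1 i (by omega) (by omega)
          · rcases List.mem_append.mp hx with hx | hx
            · obtain ⟨i, hi, rfl⟩ := List.mem_map.mp hx
              rw [List.mem_range'_1] at hi
              exact hve1 i (by omega) (by omega)
            · rw [List.mem_singleton] at hx
              subst hx
              exact hve1 d1 (by omega) (by omega)
      · intro g hg
        obtain ⟨i, hi, rfl⟩ := List.mem_map.mp hg
        rw [List.mem_range'_1] at hi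
        exact he1 i (by omega) (by omega)
    have hlastB : ((v j) :: BV).getLast? = some (v d1) := by
      rw [show (v j) :: BV = ((v j) :: u :: ((List.range' 1 (j - 1)).map v ++
        (List.range' (j + 1) (d1 - 1 - j)).map v)) ++ [v d1] from by rw [hBVdef]; simp]
      exact hlastQ _ _
    have hA : LP (v d1) ((List.range' (d1 + 1) (t - 1 - d1)).map v)
        ((List.range' (d1 + 1) (t - 1 - d1)).map e) := hasc (t - 1 - d1) d1 (by omega) (by omega)
    have hlA : ((v d1) :: (List.range' (d1 + 1) (t - 1 - d1)).map v).getLast?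
        = some (v (t - 1)) := by
      have h := hlast_asc d1 (t - 1 - d1)
      rwa [show d1 + (t - 1 - d1) = t - 1 from by omega] at h
    have h3 : LP (v (t - 1)) [z] [e t] := ⟨hvt, hz, trivial⟩
    have h23 := LP_append hA h3 hlA
    have hlp := LP_append hblock h23 hlastB
    refine ⟨_, _, hlp, ?_, ?_⟩
    · apply hmaster _ u z (j :: (List.range' 1 (j - 1) ++ (List.range' (j + 1) (d1 - 1 - j) ++
        ([d1] ++ List.range' (d1 + 1) (t - 1 - d1))))) ?_ huU hzU huz ?_ ?_
      · rw [hBVdef]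
        refine Multiset.ext.mpr fun a => ?_
        simp only [List.map_cons, List.map_append, List.map_nil, List.map_singleton,
          ← Multiset.cons_coe, ← Multiset.coe_add,
          Multiset.count_add, Multiset.count_cons, Multiset.coe_nil, Multiset.count_zero]
        split_ifs <;> omega
      · rw [← Multiset.coe_nodup, Multiset.nodup_iff_count_le_one]
        intro a
        simp only [← Multiset.cons_coe, ← Multiset.coe_add, Multiset.count_add,
          Multiset.count_cons, Multiset.coe_nil, Multiset.count_zero, hRcount]
        split_ifs <;> omega
      · intro i hi
        simp only [List.mem_cons, List.mem_append, List.mem_singleton, List.mem_range'_1,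
          List.mem_nil_iff, or_false, false_or] at hi
        casesm* _ ∨ _ <;> omega
    · rw [show (List.range' 1 d1).map e ++ ((List.range' (d1 + 1) (t - 1 - d1)).map e ++ [e t])
          = (List.range' 1 d1 ++ (List.range' (d1 + 1) (t - 1 - d1) ++ [t])).map e from by simp]
      refine hEeq _ ?_
      refine Multiset.ext.mpr fun a => ?_
      simp only [← Multiset.cons_coe, ← Multiset.coe_add, Multiset.count_add,
        Multiset.count_cons, Multiset.coe_nil, Multiset.count_zero, hRcount]
      split_ifs <;> omega
  have goodB' : ∀ j, t - d2 + 1 ≤ j → j ≤ t - 1 →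
      ∃ V Es, LP (v j) V Es ∧ (v j :: V).Nodup ∧
        (↑Es : Multiset (Finset (Fin n))) = (↑Pl : Multiset (Finset (Fin n))) := by
    intro j hj1 hj2
    obtain ⟨z, hz, hzU, -⟩ := hpick (e 1) hE1 (v 1)
    obtain ⟨u, hu', huU, huz⟩ := hpick (e t) hEt z
    -- clique block from v j to v (t - d2)
    set BV : List (Fin n) := u :: ((List.range' (t - d2 + 1) (j - 1 - (t - d2))).map v ++
      ((List.range' (j + 1) (t - 1 - j)).map v ++ [v (t - d2)])) with hBVdef
    have hblock : LP (v j) BV ((List.range' (t - d2 + 1) d2).map e) := by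
      refine LP_clique ?_ (hvet j (by omega) (by omega)) ?_ ?_
      · rw [hBVdef]
        simp only [List.length_cons, List.length_append, List.length_map, List.length_range',
          List.length_singleton, List.length_nil]
        omega
      · intro x hx
        rw [hBVdef] at hx
        rcases List.mem_cons.mp hx with rfl | hx
        · exact hu'
        · rcases List.mem_append.mp hx with hx | hx
          · obtain ⟨i, hi, rfl⟩ := List.mem_map.mp hx
            rw [List.mem_range'_1] at hi
            exact hvet i (by omega) (by omega)
          · rcases List.mem_append.mp hx with hx | hx
            · obtain ⟨i, hi, rfl⟩ := List.mem_map.mp hx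
              rw [List.mem_range'_1] at hi
              exact hvet i (by omega) (by omega)
            · rw [List.mem_singleton] at hx
              subst hx
              exact hvet (t - d2) (by omega) (by omega)
      · intro g hg
        obtain ⟨i, hi, rfl⟩ := List.mem_map.mp hg
        rw [List.mem_range'_1] at hi
        exact het i (by omega) (by omega)
    have hlastB : ((v j) :: BV).getLast? = some (v (t - d2)) := by
      rw [show (v j) :: BV = ((v j) :: u :: ((List.range' (t - d2 + 1) (j - 1 - (t - d2))).map v ++
        (List.range' (j + 1) (t - 1 - j)).map v)) ++ [v (t - d2)] from by rw [hBVdef]; simp]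
      exact hlastQ _ _
    have hD : LP (v (t - d2)) (((List.range' 1 (t - d2 - 1)).map v).reverse)
        (((List.range' 2 (t - d2 - 1)).map e).reverse) := by
      have h := hdesc (t - d2 - 1) 1 le_rfl (by omega)
      rwa [show 1 + (t - d2 - 1) = t - d2 from by omega] at h
    have hlD : ((v (t - d2)) :: ((List.range' 1 (t - d2 - 1)).map v).reverse).getLast?
        = some (v 1) := by
      have h := hlast_desc 1 (t - d2 - 1)
      rwa [show 1 + (t - d2 - 1) = t - d2 from by omega] at h
    have h3 : LP (v 1) [z] [e 1] := ⟨hv1, hz, trivial⟩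
    have h23 := LP_append hD h3 hlD
    have hlp := LP_append hblock h23 hlastB
    refine ⟨_, _, hlp, ?_, ?_⟩
    · apply hmaster _ u z (j :: (List.range' (t - d2 + 1) (j - 1 - (t - d2)) ++
        (List.range' (j + 1) (t - 1 - j) ++ ([t - d2] ++ List.range' 1 (t - d2 - 1))))) ?_
        huU hzU huz ?_ ?_
      · rw [hBVdef]
        refine Multiset.ext.mpr fun a => ?_
        simp only [List.map_cons, List.map_append, List.map_nil, List.map_singleton,
          ← Multiset.cons_coe, ← Multiset.coe_add, Multiset.coe_reverse,
          Multiset.count_add, Multiset.count_cons, Multiset.coe_nil, Multiset.count_zero]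
        split_ifs <;> omega
      · rw [← Multiset.coe_nodup, Multiset.nodup_iff_count_le_one]
        intro a
        simp only [← Multiset.cons_coe, ← Multiset.coe_add, Multiset.count_add,
          Multiset.count_cons, Multiset.coe_nil, Multiset.count_zero, hRcount]
        split_ifs <;> omega
      · intro i hi
        simp only [List.mem_cons, List.mem_append, List.mem_singleton, List.mem_range'_1,
          List.mem_nil_iff, or_false, false_or] at hi
        casesm* _ ∨ _ <;> omega
    · rw [show (List.range' (t - d2 + 1) d2).map e ++ (((List.range' 2 (t - d2 - 1)).map e).reverse ++ [e 1])
          = (List.range' (t - d2 + 1) d2 ++ ((List.range' 2 (t - d2 - 1)).reverse ++ [1])).map e from by simp]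
      refine hEeq _ ?_
      refine Multiset.ext.mpr fun a => ?_
      simp only [← Multiset.cons_coe, ← Multiset.coe_add, Multiset.coe_reverse, Multiset.count_add,
        Multiset.count_cons, Multiset.coe_nil, Multiset.count_zero, hRcount]
      split_ifs <;> omega
  have good_e1 : ∀ w, w ∈ e 1 → w ≠ v d1 →
      ∃ V Es, LP w V Es ∧ (w :: V).Nodup ∧
        (↑Es : Multiset (Finset (Fin n))) = (↑Pl : Multiset (Finset (Fin n))) := by
    intro w hw hwd
    by_cases hwU : w ∈ UF
    · obtain ⟨j, hj, hjw⟩ := Finset.mem_image.mp hwU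
      rw [Finset.mem_Icc] at hj
      subst hjw
      have hjd : j ≤ d1 := hie1 j hj.1 hj.2 hw
      have hjd' : j ≤ d1 - 1 := by
        rcases Nat.lt_or_ge j d1 with h | h
        · omega
        · exact absurd (congrArg v (by omega : j = d1)) hwd
      exact goodB j hj.1 hjd'
    · obtain ⟨z, hz, hzU, hzw⟩ := hpick (e t) hEt w
      exact goodA w z hw hwU hz hzU (Ne.symm hzw)
  have good_et : ∀ w, w ∈ e t → w ≠ v (t - d2) →
      ∃ V Es, LP w V Es ∧ (w :: V).Nodup ∧
        (↑Es : Multiset (Finset (Fin n))) = (↑Pl : Multiset (Finset (Fin n))) := by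
    intro w hw hwd
    by_cases hwU : w ∈ UF
    · obtain ⟨j, hj, hjw⟩ := Finset.mem_image.mp hwU
      rw [Finset.mem_Icc] at hj
      subst hjw
      have hjd : t - d2 ≤ j := hiet j hj.1 hj.2 hw
      have hjd' : t - d2 + 1 ≤ j := by
        rcases Nat.lt_or_ge (t - d2) j with h | h
        · omega
        · exact absurd (congrArg v (by omega : j = t - d2)) hwd
      exact goodB' j hjd' hj.2
    · obtain ⟨z, hz, hzU, hzw⟩ := hpick (e 1) hE1 w
      exact goodA' w z hw hwU hz hzU (Ne.symm hzw)
  have goodC : ∀ i x, d1 + 1 ≤ i → i ≤ t - d2 → x ∈ e i → x ∈ e 1 → x ≠ v d1 →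
      ∃ V Es, LP (v (i - 1)) V Es ∧ (v (i - 1) :: V).Nodup ∧
        (↑Es : Multiset (Finset (Fin n))) = (↑Pl : Multiset (Finset (Fin n))) := by
    intro i x hi1 hi2 hxi hx1 hxd
    have hivm := hvmid i (by omega) (by omega)
    by_cases hxU : x ∈ UF
    · -- x = v j with 1 ≤ j ≤ d1 - 1
      obtain ⟨j, hj, hxv⟩ := Finset.mem_image.mp hxU
      rw [Finset.mem_Icc] at hj
      have hxi' : v j ∈ e i := hxv ▸ hxi
      have hx1' : v j ∈ e 1 := hxv ▸ hx1
      have hjd : j ≤ d1 := hie1 j hj.1 hj.2 hx1'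
      have hjd' : j ≤ d1 - 1 := by
        rcases Nat.lt_or_ge j d1 with h | h
        · omega
        · exact absurd (congrArg v (by omega : j = d1)) (hxv ▸ hxd)
      obtain ⟨z, hz, hzU, -⟩ := hpick (e t) hEt (v 1)
      obtain ⟨u, hu', huU, huz⟩ := hpick (e 1) hE1 z
      have h1 : LP (v (i - 1)) (((List.range' d1 (i - 1 - d1)).map v).reverse)
          (((List.range' (d1 + 1) (i - 1 - d1)).map e).reverse) := by
        have h := hdesc (i - 1 - d1) d1 (by omega) (by omega)
        rwa [show d1 + (i - 1 - d1) = i - 1 from by omega] at h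
      have hl1 : ((v (i - 1)) :: ((List.range' d1 (i - 1 - d1)).map v).reverse).getLast?
          = some (v d1) := by
        have h := hlast_desc d1 (i - 1 - d1)
        rwa [show d1 + (i - 1 - d1) = i - 1 from by omega] at h
      set BV : List (Fin n) := u :: ((List.range' 1 (j - 1)).map v ++
        ((List.range' (j + 1) (d1 - 1 - j)).map v ++ [v j])) with hBVdef
      have hblock : LP (v d1) BV ((List.range' 1 d1).map e) := by
        refine LP_clique ?_ (hve1 d1 (by omega) (by omega)) ?_ ?_
        · rw [hBVdef]
          simp only [List.length_cons, List.length_append, List.length_map, List.length_range',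
            List.length_singleton, List.length_nil]
          omega
        · intro y hy
          rw [hBVdef] at hy
          rcases List.mem_cons.mp hy with rfl | hy
          · exact hu'
          · rcases List.mem_append.mp hy with hy | hy
            · obtain ⟨a, ha, rfl⟩ := List.mem_map.mp hy
              rw [List.mem_range'_1] at ha
              exact hve1 a (by omega) (by omega)
            · rcases List.mem_append.mp hy with hy | hy
              · obtain ⟨a, ha, rfl⟩ := List.mem_map.mp hy
                rw [List.mem_range'_1] at ha
                exact hve1 a (by omega) (by omega)
              · rw [List.mem_singleton] at hy
                subst hy
                exact hx1'
        · intro g hg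
          obtain ⟨a, ha, rfl⟩ := List.mem_map.mp hg
          rw [List.mem_range'_1] at ha
          exact he1 a (by omega) (by omega)
      have hlastB : ((v d1) :: BV).getLast? = some (v j) := by
        rw [show (v d1) :: BV = ((v d1) :: u :: ((List.range' 1 (j - 1)).map v ++
          (List.range' (j + 1) (d1 - 1 - j)).map v)) ++ [v j] from by rw [hBVdef]; simp]
        exact hlastQ _ _
      have h3 : LP (v j) [v i] [e i] := ⟨hxi', hivm.2, trivial⟩
      have h4 : LP (v i) ((List.range' (i + 1) (t - 1 - i)).map v)
          ((List.range' (i + 1) (t - 1 - i)).map e) := hasc (t - 1 - i) i (by omega) (by omega)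
      have hl4 : ((v i) :: (List.range' (i + 1) (t - 1 - i)).map v).getLast?
          = some (v (t - 1)) := by
        have h := hlast_asc i (t - 1 - i)
        rwa [show i + (t - 1 - i) = t - 1 from by omega] at h
      have h5 : LP (v (t - 1)) [z] [e t] := ⟨hvt, hz, trivial⟩
      have h45 := LP_append h4 h5 hl4
      have h345 := LP_append h3 h45 (by simp)
      have hB345 := LP_append hblock h345 hlastB
      have hlp := LP_append h1 hB345 hl1
      refine ⟨_, _, hlp, ?_, ?_⟩
      · apply hmaster _ u z ((i - 1) :: (List.range' d1 (i - 1 - d1) ++ (List.range' 1 (j - 1) ++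
          (List.range' (j + 1) (d1 - 1 - j) ++ ([j] ++ ([i] ++ List.range' (i + 1) (t - 1 - i)))))))
          ?_ huU hzU huz ?_ ?_
        · rw [hBVdef]
          refine Multiset.ext.mpr fun a => ?_
          simp only [List.map_cons, List.map_append, List.map_nil, List.map_singleton,
            ← Multiset.cons_coe, ← Multiset.coe_add, Multiset.coe_reverse,
            Multiset.count_add, Multiset.count_cons, Multiset.coe_nil, Multiset.count_zero]
          split_ifs <;> omega
        · rw [← Multiset.coe_nodup, Multiset.nodup_iff_count_le_one]
          intro a
          simp only [← Multiset.cons_coe, ← Multiset.coe_add, Multiset.count_add,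
            Multiset.count_cons, Multiset.coe_nil, Multiset.count_zero, hRcount]
          split_ifs <;> omega
        · intro a ha
          simp only [List.mem_cons, List.mem_append, List.mem_singleton, List.mem_range'_1,
            List.mem_nil_iff, or_false, false_or] at ha
          casesm* _ ∨ _ <;> omega
      · rw [show ((List.range' (d1 + 1) (i - 1 - d1)).map e).reverse ++ ((List.range' 1 d1).map e ++
            ([e i] ++ ((List.range' (i + 1) (t - 1 - i)).map e ++ [e t])))
            = ((List.range' (d1 + 1) (i - 1 - d1)).reverse ++ (List.range' 1 d1 ++
              ([i] ++ (List.range' (i + 1) (t - 1 - i) ++ [t])))).map e from by simp]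
        refine hEeq _ ?_
        refine Multiset.ext.mpr fun a => ?_
        simp only [← Multiset.cons_coe, ← Multiset.coe_add, Multiset.coe_reverse, Multiset.count_add,
          Multiset.count_cons, Multiset.coe_nil, Multiset.count_zero, hRcount]
        split_ifs <;> omega
    · -- x fresh
      obtain ⟨z, hz, hzU, hzx⟩ := hpick (e t) hEt x
      have h1 : LP (v (i - 1)) (((List.range' 1 (i - 2)).map v).reverse)
          (((List.range' 2 (i - 2)).map e).reverse) := by
        have h := hdesc (i - 2) 1 le_rfl (by omega)
        rwa [show 1 + (i - 2) = i - 1 from by omega] at h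
      have hl1 : ((v (i - 1)) :: ((List.range' 1 (i - 2)).map v).reverse).getLast?
          = some (v 1) := by
        have h := hlast_desc 1 (i - 2)
        rwa [show 1 + (i - 2) = i - 1 from by omega] at h
      have h2 : LP (v 1) [x] [e 1] := ⟨hv1, hx1, trivial⟩
      have h3 : LP x [v i] [e i] := ⟨hxi, hivm.2, trivial⟩
      have h4 : LP (v i) ((List.range' (i + 1) (t - 1 - i)).map v)
          ((List.range' (i + 1) (t - 1 - i)).map e) := hasc (t - 1 - i) i (by omega) (by omega)
      have hl4 : ((v i) :: (List.range' (i + 1) (t - 1 - i)).map v).getLast?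
          = some (v (t - 1)) := by
        have h := hlast_asc i (t - 1 - i)
        rwa [show i + (t - 1 - i) = t - 1 from by omega] at h
      have h5 : LP (v (t - 1)) [z] [e t] := ⟨hvt, hz, trivial⟩
      have h45 := LP_append h4 h5 hl4
      have h345 := LP_append h3 h45 (by simp)
      have h2345 := LP_append h2 h345 (by simp)
      have hlp := LP_append h1 h2345 hl1
      refine ⟨_, _, hlp, ?_, ?_⟩
      · apply hmaster _ x z ((i - 1) :: (List.range' 1 (i - 2) ++
          ([i] ++ List.range' (i + 1) (t - 1 - i)))) ?_ hxU hzU (Ne.symm hzx) ?_ ?_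
        · refine Multiset.ext.mpr fun a => ?_
          simp only [List.map_cons, List.map_append, List.map_nil, List.map_singleton,
            ← Multiset.cons_coe, ← Multiset.coe_add, Multiset.coe_reverse,
            Multiset.count_add, Multiset.count_cons, Multiset.coe_nil, Multiset.count_zero]
          split_ifs <;> omega
        · rw [← Multiset.coe_nodup, Multiset.nodup_iff_count_le_one]
          intro a
          simp only [← Multiset.cons_coe, ← Multiset.coe_add, Multiset.count_add,
            Multiset.count_cons, Multiset.coe_nil, Multiset.count_zero, hRcount]
          split_ifs <;> omega
        · intro a ha
          simp only [List.mem_cons, List.mem_append, List.mem_singleton, List.mem_range'_1,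
            List.mem_nil_iff, or_false, false_or] at ha
          casesm* _ ∨ _ <;> omega
      · rw [show ((List.range' 2 (i - 2)).map e).reverse ++ ([e 1] ++
            ([e i] ++ ((List.range' (i + 1) (t - 1 - i)).map e ++ [e t])))
            = ((List.range' 2 (i - 2)).reverse ++ ([1] ++
              ([i] ++ (List.range' (i + 1) (t - 1 - i) ++ [t])))).map e from by simp]
        refine hEeq _ ?_
        refine Multiset.ext.mpr fun a => ?_
        simp only [← Multiset.cons_coe, ← Multiset.coe_add, Multiset.coe_reverse, Multiset.count_add,
          Multiset.count_cons, Multiset.coe_nil, Multiset.count_zero, hRcount]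
        split_ifs <;> omega
  have goodD : ∀ i x, d1 + 1 ≤ i → i ≤ t - d2 → x ∈ e i → x ∈ e t → x ≠ v (t - d2) →
      ∃ V Es, LP (v i) V Es ∧ (v i :: V).Nodup ∧
        (↑Es : Multiset (Finset (Fin n))) = (↑Pl : Multiset (Finset (Fin n))) := by
    intro i x hi1 hi2 hxi hxt hxd
    have hivm := hvmid i (by omega) (by omega)
    by_cases hxU : x ∈ UF
    · -- x = v j with t - d2 + 1 ≤ j ≤ t - 1
      obtain ⟨j, hj, hxv⟩ := Finset.mem_image.mp hxU
      rw [Finset.mem_Icc] at hj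
      have hxi' : v j ∈ e i := hxv ▸ hxi
      have hxt' : v j ∈ e t := hxv ▸ hxt
      have hjd : t - d2 ≤ j := hiet j hj.1 hj.2 hxt'
      have hjd' : t - d2 + 1 ≤ j := by
        rcases Nat.lt_or_ge (t - d2) j with h | h
        · omega
        · exact absurd (congrArg v (by omega : j = t - d2)) (hxv ▸ hxd)
      obtain ⟨u', hu1', huU', -⟩ := hpick (e t) hEt (v 1)
      obtain ⟨u, hu', huU, huu⟩ := hpick (e 1) hE1 u'
      have h1 : LP (v i) ((List.range' (i + 1) (t - d2 - i)).map v)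
          ((List.range' (i + 1) (t - d2 - i)).map e) := hasc (t - d2 - i) i (by omega) (by omega)
      have hl1 : ((v i) :: (List.range' (i + 1) (t - d2 - i)).map v).getLast?
          = some (v (t - d2)) := by
        have h := hlast_asc i (t - d2 - i)
        rwa [show i + (t - d2 - i) = t - d2 from by omega] at h
      set BV : List (Fin n) := u' :: ((List.range' (t - d2 + 1) (j - 1 - (t - d2))).map v ++
        ((List.range' (j + 1) (t - 1 - j)).map v ++ [v j])) with hBVdef
      have hblock : LP (v (t - d2)) BV ((List.range' (t - d2 + 1) d2).map e) := by
        refine LP_clique ?_ (hvet (t - d2) (by omega) (by omega)) ?_ ?_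
        · rw [hBVdef]
          simp only [List.length_cons, List.length_append, List.length_map, List.length_range',
            List.length_singleton, List.length_nil]
          omega
        · intro y hy
          rw [hBVdef] at hy
          rcases List.mem_cons.mp hy with rfl | hy
          · exact hu1'
          · rcases List.mem_append.mp hy with hy | hy
            · obtain ⟨a, ha, rfl⟩ := List.mem_map.mp hy
              rw [List.mem_range'_1] at ha
              exact hvet a (by omega) (by omega)
            · rcases List.mem_append.mp hy with hy | hy
              · obtain ⟨a, ha, rfl⟩ := List.mem_map.mp hy
                rw [List.mem_range'_1] at ha
                exact hvet a (by omega) (by omega)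
              · rw [List.mem_singleton] at hy
                subst hy
                exact hxt'
        · intro g hg
          obtain ⟨a, ha, rfl⟩ := List.mem_map.mp hg
          rw [List.mem_range'_1] at ha
          exact het a (by omega) (by omega)
      have hlastB : ((v (t - d2)) :: BV).getLast? = some (v j) := by
        rw [show (v (t - d2)) :: BV = ((v (t - d2)) :: u' ::
          ((List.range' (t - d2 + 1) (j - 1 - (t - d2))).map v ++
          (List.range' (j + 1) (t - 1 - j)).map v)) ++ [v j] from by rw [hBVdef]; simp]
        exact hlastQ _ _
      have h3 : LP (v j) [v (i - 1)] [e i] := ⟨hxi', hivm.1, trivial⟩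
      have h4 : LP (v (i - 1)) (((List.range' 1 (i - 2)).map v).reverse)
          (((List.range' 2 (i - 2)).map e).reverse) := by
        have h := hdesc (i - 2) 1 le_rfl (by omega)
        rwa [show 1 + (i - 2) = i - 1 from by omega] at h
      have hl4 : ((v (i - 1)) :: ((List.range' 1 (i - 2)).map v).reverse).getLast?
          = some (v 1) := by
        have h := hlast_desc 1 (i - 2)
        rwa [show 1 + (i - 2) = i - 1 from by omega] at h
      have h5 : LP (v 1) [u] [e 1] := ⟨hv1, hu', trivial⟩
      have h45 := LP_append h4 h5 hl4
      have h345 := LP_append h3 h45 (by simp)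
      have hB345 := LP_append hblock h345 hlastB
      have hlp := LP_append h1 hB345 hl1
      refine ⟨_, _, hlp, ?_, ?_⟩
      · apply hmaster _ u' u (i :: (List.range' (i + 1) (t - d2 - i) ++
          (List.range' (t - d2 + 1) (j - 1 - (t - d2)) ++ (List.range' (j + 1) (t - 1 - j) ++
          ([j] ++ ([i - 1] ++ List.range' 1 (i - 2))))))) ?_ huU' huU (Ne.symm huu) ?_ ?_
        · rw [hBVdef]
          refine Multiset.ext.mpr fun a => ?_
          simp only [List.map_cons, List.map_append, List.map_nil, List.map_singleton,
            ← Multiset.cons_coe, ← Multiset.coe_add, Multiset.coe_reverse,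
            Multiset.count_add, Multiset.count_cons, Multiset.coe_nil, Multiset.count_zero]
          split_ifs <;> omega
        · rw [← Multiset.coe_nodup, Multiset.nodup_iff_count_le_one]
          intro a
          simp only [← Multiset.cons_coe, ← Multiset.coe_add, Multiset.count_add,
            Multiset.count_cons, Multiset.coe_nil, Multiset.count_zero, hRcount]
          split_ifs <;> omega
        · intro a ha
          simp only [List.mem_cons, List.mem_append, List.mem_singleton, List.mem_range'_1,
            List.mem_nil_iff, or_false, false_or] at ha
          casesm* _ ∨ _ <;> omega
      · rw [show (List.range' (i + 1) (t - d2 - i)).map e ++ ((List.range' (t - d2 + 1) d2).map e ++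
            ([e i] ++ (((List.range' 2 (i - 2)).map e).reverse ++ [e 1])))
            = (List.range' (i + 1) (t - d2 - i) ++ (List.range' (t - d2 + 1) d2 ++
              ([i] ++ ((List.range' 2 (i - 2)).reverse ++ [1])))).map e from by simp]
        refine hEeq _ ?_
        refine Multiset.ext.mpr fun a => ?_
        simp only [← Multiset.cons_coe, ← Multiset.coe_add, Multiset.coe_reverse, Multiset.count_add,
          Multiset.count_cons, Multiset.coe_nil, Multiset.count_zero, hRcount]
        split_ifs <;> omega
    · -- x fresh
      obtain ⟨u, hu', huU, hux⟩ := hpick (e 1) hE1 x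
      have h1 : LP (v i) ((List.range' (i + 1) (t - 1 - i)).map v)
          ((List.range' (i + 1) (t - 1 - i)).map e) := hasc (t - 1 - i) i (by omega) (by omega)
      have hl1 : ((v i) :: (List.range' (i + 1) (t - 1 - i)).map v).getLast?
          = some (v (t - 1)) := by
        have h := hlast_asc i (t - 1 - i)
        rwa [show i + (t - 1 - i) = t - 1 from by omega] at h
      have h2 : LP (v (t - 1)) [x] [e t] := ⟨hvt, hxt, trivial⟩
      have h3 : LP x [v (i - 1)] [e i] := ⟨hxi, hivm.1, trivial⟩
      have h4 : LP (v (i - 1)) (((List.range' 1 (i - 2)).map v).reverse)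
          (((List.range' 2 (i - 2)).map e).reverse) := by
        have h := hdesc (i - 2) 1 le_rfl (by omega)
        rwa [show 1 + (i - 2) = i - 1 from by omega] at h
      have hl4 : ((v (i - 1)) :: ((List.range' 1 (i - 2)).map v).reverse).getLast?
          = some (v 1) := by
        have h := hlast_desc 1 (i - 2)
        rwa [show 1 + (i - 2) = i - 1 from by omega] at h
      have h5 : LP (v 1) [u] [e 1] := ⟨hv1, hu', trivial⟩
      have h45 := LP_append h4 h5 hl4
      have h345 := LP_append h3 h45 (by simp)
      have h2345 := LP_append h2 h345 (by simp)
      have hlp := LP_append h1 h2345 hl1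
      refine ⟨_, _, hlp, ?_, ?_⟩
      · apply hmaster _ x u (i :: (List.range' (i + 1) (t - 1 - i) ++
          ([i - 1] ++ List.range' 1 (i - 2)))) ?_ hxU huU (Ne.symm hux) ?_ ?_
        · refine Multiset.ext.mpr fun a => ?_
          simp only [List.map_cons, List.map_append, List.map_nil, List.map_singleton,
            ← Multiset.cons_coe, ← Multiset.coe_add, Multiset.coe_reverse,
            Multiset.count_add, Multiset.count_cons, Multiset.coe_nil, Multiset.count_zero]
          split_ifs <;> omega
        · rw [← Multiset.coe_nodup, Multiset.nodup_iff_count_le_one]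
          intro a
          simp only [← Multiset.cons_coe, ← Multiset.coe_add, Multiset.count_add,
            Multiset.count_cons, Multiset.coe_nil, Multiset.count_zero, hRcount]
          split_ifs <;> omega
        · intro a ha
          simp only [List.mem_cons, List.mem_append, List.mem_singleton, List.mem_range'_1,
            List.mem_nil_iff, or_false, false_or] at ha
          casesm* _ ∨ _ <;> omega
      · rw [show (List.range' (i + 1) (t - 1 - i)).map e ++ ([e t] ++
            ([e i] ++ (((List.range' 2 (i - 2)).map e).reverse ++ [e 1])))
            = (List.range' (i + 1) (t - 1 - i) ++ ([t] ++
              ([i] ++ ((List.range' 2 (i - 2)).reverse ++ [1])))).map e from by simp]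
        refine hEeq _ ?_
        refine Multiset.ext.mpr fun a => ?_
        simp only [← Multiset.cons_coe, ← Multiset.coe_add, Multiset.coe_reverse, Multiset.count_add,
          Multiset.count_cons, Multiset.coe_nil, Multiset.count_zero, hRcount]
        split_ifs <;> omega
  -- ===== e1 ∩ et ⊆ U, via a Berge cycle of length t =====
  have hinterU : ∀ y : Fin n, y ∈ e 1 → y ∈ e t → y ∈ UF := by
    intro y hy1 hyt
    by_contra hyU
    have hA : LP (v 1) ((List.range' 2 (t - 2)).map v) ((List.range' 2 (t - 2)).map e) :=
      hasc (t - 2) 1 le_rfl (by omega)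
    have hlp : LP y ([v 1] ++ (List.range' 2 (t - 2)).map v)
        ([e 1] ++ (List.range' 2 (t - 2)).map e) :=
      LP_append (V1 := [v 1]) (Es1 := [e 1]) ⟨hy1, hv1, trivial⟩ hA (by simp)
    have hnd : (y :: ([v 1] ++ (List.range' 2 (t - 2)).map v)).Nodup := by
      refine List.nodup_cons.mpr ⟨?_, ?_⟩
      · simp only [List.mem_append, List.mem_singleton, List.mem_map, List.mem_range'_1]
        push_neg
        refine ⟨hfresh y hyU 1 le_rfl (by omega), ?_⟩
        rintro a ha rfl
        exact hfresh (v a) hyU a (by omega) (by omega) rfl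
      · rw [show [v 1] ++ (List.range' 2 (t - 2)).map v
            = (1 :: List.range' 2 (t - 2)).map v from by simp]
        refine List.Nodup.map_on ?_ ?_
        · intro a ha b hb hab
          simp only [List.mem_cons, List.mem_range'_1] at ha hb
          refine hvinj' a b ?_ ?_ ?_ ?_ hab <;> (casesm* _ ∨ _ <;> omega)
        · rw [← Multiset.coe_nodup, Multiset.nodup_iff_count_le_one]
          intro a
          simp only [← Multiset.cons_coe, Multiset.count_cons, hRcount]
          split_ifs <;> omega
    have hlg : (y :: ([v 1] ++ (List.range' 2 (t - 2)).map v)).getLast (by simp) ∈ e t := by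
      have hq : (y :: ([v 1] ++ (List.range' 2 (t - 2)).map v)).getLast? = some (v (t - 1)) := by
        rw [List.singleton_append, List.getLast?_cons_cons]
        have h := hlast_asc 1 (t - 2)
        rwa [show 1 + (t - 2) = t - 1 from by omega] at h
      rw [getLast_eq_of_getLast? (by simp) hq]
      exact hvt
    have hEle : (↑(([e 1] ++ (List.range' 2 (t - 2)).map e) ++ [e t])
        : Multiset (Finset (Fin n))) ≤ E := by
      rw [show ([e 1] ++ (List.range' 2 (t - 2)).map e) ++ [e t]
          = ((1 :: List.range' 2 (t - 2)) ++ [t]).map e from by simp]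
      rw [hEeq _ ?_]
      · exact he'
      · refine Multiset.ext.mpr fun a => ?_
        simp only [← Multiset.cons_coe, ← Multiset.coe_add, Multiset.count_add,
          Multiset.count_cons, Multiset.coe_nil, Multiset.count_zero, hRcount]
        split_ifs <;> omega
    have hcycle := toCycle (E := E) hlp hnd hyt hlg hEle
    have hlen : ([v 1] ++ (List.range' 2 (t - 2)).map v).length + 1 = t := by
      simp only [List.length_append, List.length_singleton, List.length_map, List.length_range']
      omega
    rw [hlen] at hcycle
    exact hcyc hcycle
  -- ===== main case analysis =====
  set W : Finset (Fin n) := (e 1 ∪ e t) \ {v d1, v (t - d2)} with hWdef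
  by_cases hWb : Multiset.card (edgeNbhd E W) ≤ m + 1
  · exact Or.inl hWb
  right
  push_neg at hWb
  -- every vertex of W is good
  have hgoodW : ∀ w ∈ W, ∃ V Es, LP w V Es ∧ (w :: V).Nodup ∧
      (↑Es : Multiset (Finset (Fin n))) = (↑Pl : Multiset (Finset (Fin n))) := by
    intro w hw
    rw [hWdef, Finset.mem_sdiff, Finset.mem_union] at hw
    have hne : w ≠ v d1 ∧ w ≠ v (t - d2) := by
      constructor <;> (intro hcon; exact hw.2 (by simp [hcon]))
    rcases hw.1 with h | h
    · exact good_e1 w h hne.1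
    · exact good_et w h hne.2
  -- find a middle edge meeting W
  have hmid : ∃ i, d1 + 1 ≤ i ∧ i ≤ t - d2 ∧ (e i ∩ W).Nonempty := by
    by_contra hcon
    push_neg at hcon
    have hle : edgeNbhd E W ≤ Multiset.filter (fun c => (c ∩ W).Nonempty) (↑Pl) := by
      rw [Multiset.le_iff_count]
      intro f
      rw [edgeNbhd, Multiset.count_filter, Multiset.count_filter]
      split_ifs with hfS
      · obtain ⟨w, hw⟩ := hfS
        rw [Finset.mem_inter] at hw
        by_contra hcnt
        push_neg at hcnt
        obtain ⟨V, Es, hlp, hnd, hms⟩ := hgoodW w hw.2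
        refine key w V Es hlp hnd hms f hw.1 ?_
        rw [Multiset.le_iff_count]
        intro g
        rw [Multiset.count_add]
        by_cases hg : g = f
        · subst hg
          rw [Multiset.count_singleton_self]
          omega
        · rw [Multiset.count_singleton, if_neg hg, Nat.add_zero]
          exact Multiset.le_iff_count.mp he' g
      · exact Nat.zero_le _
    have hsplit : (↑Pl : Multiset (Finset (Fin n))) =
        ↑((List.range' 1 d1 ++ (List.range' (d1 + 1) (t - d2 - d1) ++ List.range' (t - d2 + 1) d2)).map e) := by
      refine (hEeq _ ?_).symm
      refine Multiset.ext.mpr fun a => ?_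
      simp only [← Multiset.coe_add, Multiset.count_add, hRcount]
      split_ifs <;> omega
    have hcard2 : Multiset.card (Multiset.filter (fun c => (c ∩ W).Nonempty) (↑Pl)) ≤ d1 + d2 := by
      rw [hsplit]
      rw [List.map_append, List.map_append, ← Multiset.coe_add, ← Multiset.coe_add]
      rw [Multiset.filter_add, Multiset.filter_add]
      rw [Multiset.card_add, Multiset.card_add]
      have c1 : Multiset.card (Multiset.filter (fun c => (c ∩ W).Nonempty)
          (↑((List.range' 1 d1).map e))) ≤ d1 := by
        refine le_trans (Multiset.card_le_card (Multiset.filter_le _ _)) ?_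
        simp
      have c3 : Multiset.card (Multiset.filter (fun c => (c ∩ W).Nonempty)
          (↑((List.range' (t - d2 + 1) d2).map e))) ≤ d2 := by
        refine le_trans (Multiset.card_le_card (Multiset.filter_le _ _)) ?_
        simp
      have c2 : Multiset.filter (fun c => (c ∩ W).Nonempty)
          (↑((List.range' (d1 + 1) (t - d2 - d1)).map e)) = 0 := by
        rw [Multiset.filter_eq_nil]
        intro c hc
        rw [Multiset.mem_coe, List.mem_map] at hc
        obtain ⟨i, hi, rfl⟩ := hc
        rw [List.mem_range'_1] at hi
        exact Finset.not_nonempty_iff_eq_empty.mpr (hcon i (by omega) (by omega))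
      rw [c2]
      simp only [Multiset.card_zero]
      omega
    have := Multiset.card_le_card hle
    omega
  obtain ⟨i, hi1, hi2, x, hx⟩ := hmid
  rw [Finset.mem_inter] at hx
  have hxW := hx.2
  have hxprop : x ∈ e 1 ∪ e t ∧ x ≠ v d1 ∧ x ≠ v (t - d2) := by
    rw [hWdef, Finset.mem_sdiff] at hxW
    refine ⟨hxW.1, ?_, ?_⟩ <;> (intro hcon; exact hxW.2 (by simp [hcon]))
  -- card of W is at least 2r - 2
  have hWcard : 2 * r - 2 ≤ W.card := by
    have hr1 : (e 1).card = r := hu _ hE1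
    have hrt : (e t).card = r := hu _ hEt
    have hsd := Finset.le_card_sdiff ({v d1, v (t - d2)} : Finset (Fin n)) (e 1 ∪ e t)
    have hcui := Finset.card_union_add_card_inter (e 1) (e t)
    rcases Nat.lt_or_ge d1 (t - d2) with hlt | hge
    · have hdisj : e 1 ∩ e t = ∅ := by
        rw [Finset.eq_empty_iff_forall_notMem]
        intro y hy
        rw [Finset.mem_inter] at hy
        obtain ⟨j, hj, rfl⟩ := Finset.mem_image.mp (hinterU y hy.1 hy.2)
        rw [Finset.mem_Icc] at hj
        have h1 := hie1 j hj.1 hj.2 hy.1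
        have h2 := hiet j hj.1 hj.2 hy.2
        omega
      rw [hdisj] at hcui
      simp only [Finset.card_empty, Nat.add_zero] at hcui
      have hD : ({v d1, v (t - d2)} : Finset (Fin n)).card ≤ 2 := by
        refine le_trans (Finset.card_insert_le _ _) ?_
        simp
      rw [hWdef]
      omega
    · have heq : d1 = t - d2 := by omega
      have hint : e 1 ∩ e t ⊆ {v d1} := by
        intro y hy
        rw [Finset.mem_inter] at hy
        obtain ⟨j, hj, rfl⟩ := Finset.mem_image.mp (hinterU y hy.1 hy.2)
        rw [Finset.mem_Icc] at hj
        have h1 := hie1 j hj.1 hj.2 hy.1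
        have h2 := hiet j hj.1 hj.2 hy.2
        have : j = d1 := by omega
        simp [this]
      have hintc : (e 1 ∩ e t).card ≤ 1 :=
        le_trans (Finset.card_le_card hint) (by simp)
      have hD : ({v d1, v (t - d2)} : Finset (Fin n)).card ≤ 1 := by
        rw [show v (t - d2) = v d1 from by rw [heq]]
        simp
      rw [hWdef]
      omega
  -- the new good vertex
  have hnew : ∃ y : Fin n, y ∉ W ∧ ∃ V Es, LP y V Es ∧ (y :: V).Nodup ∧
      (↑Es : Multiset (Finset (Fin n))) = (↑Pl : Multiset (Finset (Fin n))) := by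
    rcases Finset.mem_union.mp hxprop.1 with hx1 | hxt
    · refine ⟨v (i - 1), ?_, goodC i x hi1 hi2 hx.1 hx1 hxprop.2.1⟩
      rw [hWdef, Finset.mem_sdiff, Finset.mem_union]
      rintro ⟨h1 | h1, h2⟩
      · have hle := hie1 (i - 1) (by omega) (by omega) h1
        have heq : i - 1 = d1 := by omega
        exact h2 (by rw [heq]; simp)
      · have := hiet (i - 1) (by omega) (by omega) h1
        omega
    · refine ⟨v i, ?_, goodD i x hi1 hi2 hx.1 hxt hxprop.2.2⟩
      rw [hWdef, Finset.mem_sdiff, Finset.mem_union]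
      rintro ⟨h1 | h1, h2⟩
      · have := hie1 i (by omega) (by omega) h1
        omega
      · have hle := hiet i (by omega) (by omega) h1
        have heq : i = t - d2 := by omega
        exact h2 (by rw [heq]; simp)
  obtain ⟨y, hyW, hygood⟩ := hnew
  refine ⟨insert y W, ?_, ?_⟩
  · rw [Finset.card_insert_of_notMem hyW]
    omega
  · rw [hPl_eq]
    apply keycount
    intro w hw
    rcases Finset.mem_insert.mp hw with rfl | hwW
    · exact hygood
    · exact hgoodW w hwW


end BergeM
end

section
/- Under the Setup: there do not exist indices 1 ≤ j < i ≤ t−1 such that v_i ∈ e_1, v_j ∈ e_1, v_{i−1} ∈ e_t, and (e_i ∖ U) ∩ (e_j ∖ U) ≠ ∅. -/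
namespace BergeM

/-- Vertex index at cycle position `m` (for `1 ≤ m ≤ t-1`; position 0 is the new vertex `w`). -/
private def sigF (j i t m : ℕ) : ℕ :=
  if m ≤ j - 1 then j - m else if m ≤ i - 1 then m else t - 1 + i - m

/-- Edge index at cycle position `m` (for `0 ≤ m ≤ t-1`). -/
private def tauF (j i t m : ℕ) : ℕ :=
  if m = 0 then j else if m ≤ j - 2 then j - m else if m = j - 1 then 1
  else if m ≤ i - 2 then m + 1 else if m = i - 1 then t
  else if m ≤ t - 2 then t - 1 + i - m else i

section IndexLemmas

variable {j i t m a b : ℕ}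

private lemma sig_bound (hj : 1 ≤ j) (hji : j < i) (hit : i + 1 ≤ t)
    (h1 : 1 ≤ m) (h2 : m ≤ t - 1) :
    1 ≤ sigF j i t m ∧ sigF j i t m ≤ t - 1 := by
  unfold sigF; split_ifs <;> omega

private lemma sig_inj (hj : 1 ≤ j) (hji : j < i) (hit : i + 1 ≤ t)
    (ha1 : 1 ≤ a) (ha2 : a ≤ t - 1) (hb1 : 1 ≤ b) (hb2 : b ≤ t - 1)
    (h : sigF j i t a = sigF j i t b) : a = b := by
  unfold sigF at h; split_ifs at h <;> omega

private lemma tau_bound (hj : 1 ≤ j) (hji : j < i) (hit : i + 1 ≤ t)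
    (h2 : m ≤ t - 1) : 1 ≤ tauF j i t m ∧ tauF j i t m ≤ t := by
  unfold tauF; split_ifs <;> omega

set_option maxHeartbeats 1600000 in
private lemma tau_inj (hj : 1 ≤ j) (hji : j < i) (hit : i + 1 ≤ t)
    (ha2 : a ≤ t - 1) (hb2 : b ≤ t - 1)
    (h : tauF j i t a = tauF j i t b) : a = b := by
  unfold tauF at h; split_ifs at h <;> omega

private lemma sig_v1 (h1 : 1 ≤ m) (h2 : m ≤ j - 1) : sigF j i t m = j - m := by
  unfold sigF; split_ifs <;> omega

private lemma sig_v2 (hj : 1 ≤ j) (h1 : j ≤ m) (h2 : m ≤ i - 1) : sigF j i t m = m := by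
  unfold sigF; split_ifs <;> omega

private lemma sig_v3 (hji : j < i) (h1 : i ≤ m) : sigF j i t m = t - 1 + i - m := by
  unfold sigF; split_ifs <;> omega

private lemma tau_v0 : tauF j i t 0 = j := by
  unfold tauF; split_ifs <;> omega

private lemma tau_v1 (h0 : 1 ≤ m) (h : m ≤ j - 2) : tauF j i t m = j - m := by
  unfold tauF; split_ifs <;> omega

private lemma tau_v2 (hj : 2 ≤ j) (h : m = j - 1) : tauF j i t m = 1 := by
  unfold tauF; split_ifs <;> omega

private lemma tau_v3 (hj : 1 ≤ j) (hji : j < i) (h1 : j ≤ m) (h : m ≤ i - 2) : tauF j i t m = m + 1 := by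
  unfold tauF; split_ifs <;> omega

private lemma tau_v4 (hj : 1 ≤ j) (hji : j < i) (h : m = i - 1) : tauF j i t m = t := by
  unfold tauF; split_ifs <;> omega

private lemma tau_v5 (hji : j < i) (h1 : i ≤ m) (h : m ≤ t - 2) :
    tauF j i t m = t - 1 + i - m := by
  unfold tauF; split_ifs <;> omega

private lemma tau_v6 (hj : 1 ≤ j) (hji : j < i) (hit : i + 1 ≤ t) (h : m = t - 1) :
    tauF j i t m = i := by
  unfold tauF; split_ifs <;> omega

end IndexLemmas

theorem stmt17    (n r k t : ℕ) (hk : 3 ≤ k) (hrk : k ≤ r) (hn : r < n)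
    (E : Multiset (Finset (Fin n))) (hu : MUniform E r) (hc : MConnected E)
    (hf : MBPFree E k)
    (ht : MHasBergePath E t) (hmax : ∀ s : ℕ, MHasBergePath E s → s ≤ t)
    (hcyc : ¬ MHasBergeCycle E t)
    (e : ℕ → Finset (Fin n)) (v : ℕ → Fin n)
    (he : (↑((List.range t).map fun i => e (i + 1)) : Multiset (Finset (Fin n))) ≤ E)
    (hvinj : Set.InjOn v (Set.Icc 1 (t - 1)))
    (hv1 : v 1 ∈ e 1) (hvt : v (t - 1) ∈ e t)
    (hvmid : ∀ i : ℕ, 2 ≤ i → i ≤ t - 1 → v (i - 1) ∈ e i ∧ v i ∈ e i)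
 :
    ¬ ∃ i j : ℕ, 1 ≤ j ∧ j < i ∧ i ≤ t - 1 ∧ v i ∈ e 1 ∧ v j ∈ e 1 ∧
      v (i - 1) ∈ e t ∧
      ((e i \ (Finset.Icc 1 (t - 1)).image v) ∩
        (e j \ (Finset.Icc 1 (t - 1)).image v)).Nonempty := by
  rintro ⟨i, j, hj1, hji, hit, hvi1, hvj1, hvit, w, hw⟩
  rw [Finset.mem_inter, Finset.mem_sdiff, Finset.mem_sdiff] at hw
  obtain ⟨⟨hwi, hwU⟩, hwj, -⟩ := hw
  have hi2 : 2 ≤ i := by omega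
  have ht3 : 3 ≤ t := by omega
  have hit' : i + 1 ≤ t := by omega
  apply hcyc
  refine ⟨fun m => if m.val = 0 then w else v (sigF j i t m.val),
          fun m => e (tauF j i t m.val), ?_, ?_, ?_⟩
  · -- injectivity
    intro a b hab
    have hab' : (if a.val = 0 then w else v (sigF j i t a.val))
        = (if b.val = 0 then w else v (sigF j i t b.val)) := hab
    have ha := a.isLt
    have hb := b.isLt
    have key : ∀ c : Fin t, ¬ c.val = 0 →
        1 ≤ sigF j i t c.val ∧ sigF j i t c.val ≤ t - 1 := by
      intro c hc
      have := c.isLt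
      exact sig_bound hj1 hji hit' (by omega) (by omega)
    by_cases ha0 : a.val = 0 <;> by_cases hb0 : b.val = 0
    · exact Fin.ext (by omega)
    · rw [if_pos ha0, if_neg hb0] at hab'
      exact absurd (Finset.mem_image.mpr
        ⟨_, Finset.mem_Icc.mpr ⟨(key b hb0).1, (key b hb0).2⟩, hab'.symm⟩) hwU
    · rw [if_neg ha0, if_pos hb0] at hab'
      exact absurd (Finset.mem_image.mpr
        ⟨_, Finset.mem_Icc.mpr ⟨(key a ha0).1, (key a ha0).2⟩, hab'⟩) hwU
    · rw [if_neg ha0, if_neg hb0] at hab'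
      have h1 := hvinj (Set.mem_Icc.mpr ⟨(key a ha0).1, (key a ha0).2⟩)
        (Set.mem_Icc.mpr ⟨(key b hb0).1, (key b hb0).2⟩) hab'
      exact Fin.ext (sig_inj hj1 hji hit' (by omega) (by omega) (by omega) (by omega) h1)
  · -- edge multiset
    have hinj2 : Function.Injective fun m : Fin t => tauF j i t m.val := by
      intro a b hab
      have ha := a.isLt; have hb := b.isLt
      exact Fin.ext (tau_inj hj1 hji hit' (by omega) (by omega) hab)
    have hnd1 : (List.ofFn fun m : Fin t => tauF j i t m.val).Nodup :=
      (List.nodup_ofFn).mpr hinj2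
    have hnd2 : ((List.range t).map fun x => x + 1).Nodup :=
      List.Nodup.map (fun a b h => by omega) List.nodup_range
    have hset2 : ((List.range t).map fun x => x + 1).toFinset = Finset.Icc 1 t := by
      ext x
      simp only [List.mem_toFinset, List.mem_map, List.mem_range, Finset.mem_Icc]
      constructor
      · rintro ⟨a, h1, rfl⟩; omega
      · rintro ⟨h1, h2⟩; exact ⟨x - 1, by omega, by omega⟩
    have hsub : (List.ofFn fun m : Fin t => tauF j i t m.val).toFinset ⊆ Finset.Icc 1 t := by
      intro x hx
      rw [List.mem_toFinset, List.mem_ofFn] at hx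
      obtain ⟨m, rfl⟩ := hx
      have := m.isLt
      have hb := tau_bound hj1 hji hit' (m := m.val) (by omega)
      exact Finset.mem_Icc.mpr ⟨hb.1, hb.2⟩
    have hset1 : (List.ofFn fun m : Fin t => tauF j i t m.val).toFinset = Finset.Icc 1 t := by
      apply Finset.eq_of_subset_of_card_le hsub
      rw [List.toFinset_card_of_nodup hnd1, List.length_ofFn, Nat.card_Icc]
      omega
    have hperm : (List.ofFn fun m : Fin t => tauF j i t m.val).Perm
        ((List.range t).map fun x => x + 1) :=
      List.perm_of_nodup_nodup_toFinset_eq hnd1 hnd2 (hset1.trans hset2.symm)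
    have heq1 : (List.ofFn fun m : Fin t => e (tauF j i t m.val)) =
        (List.ofFn fun m : Fin t => tauF j i t m.val).map e := by
      rw [List.map_ofFn]; rfl
    have heq2 : ((List.range t).map fun x => e (x + 1)) =
        ((List.range t).map fun x => x + 1).map e := by
      rw [List.map_map]; rfl
    calc (↑(List.ofFn fun m : Fin t => e (tauF j i t m.val)) : Multiset (Finset (Fin n)))
        = ↑((List.range t).map fun x => e (x + 1)) := by
          rw [Multiset.coe_eq_coe, heq1, heq2]; exact hperm.map e
      _ ≤ E := he
  · -- incidences
    intro m
    obtain ⟨a, hm⟩ := m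
    dsimp only
    by_cases h0 : a = 0
    · subst h0
      rw [tau_v0]
      refine ⟨by rw [if_pos rfl]; exact hwj, ?_⟩
      show (if (0 + 1) % t = 0 then w else v (sigF j i t ((0 + 1) % t))) ∈ _
      rw [show (0 + 1) % t = 1 from Nat.mod_eq_of_lt (by omega), if_neg (by omega)]
      by_cases hj2 : 2 ≤ j
      · rw [sig_v1 (by omega) (by omega)]
        exact (hvmid j (by omega) (by omega)).1
      · have hj1' : j = 1 := by omega
        rw [sig_v2 hj1 (by omega) (by omega), hj1']
        exact hv1
    by_cases h1 : a ≤ j - 2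
    · rw [tau_v1 (by omega) h1]
      constructor
      · rw [if_neg h0, sig_v1 (by omega) (by omega)]
        exact (hvmid (j - a) (by omega) (by omega)).2
      · show (if (a + 1) % t = 0 then w else v (sigF j i t ((a + 1) % t))) ∈ _
        rw [Nat.mod_eq_of_lt (show a + 1 < t by omega), if_neg (by omega),
            sig_v1 (by omega) (by omega), show j - (a + 1) = j - a - 1 from by omega]
        exact (hvmid (j - a) (by omega) (by omega)).1
    by_cases h2 : a = j - 1
    · rw [tau_v2 (by omega) h2]
      constructor
      · rw [if_neg h0, sig_v1 (by omega) (by omega), show j - a = 1 from by omega]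
        exact hv1
      · show (if (a + 1) % t = 0 then w else v (sigF j i t ((a + 1) % t))) ∈ _
        rw [Nat.mod_eq_of_lt (show a + 1 < t by omega), if_neg (by omega),
            sig_v2 hj1 (by omega) (by omega), show a + 1 = j from by omega]
        exact hvj1
    by_cases h3 : a ≤ i - 2
    · rw [tau_v3 hj1 hji (by omega) h3]
      constructor
      · rw [if_neg h0, sig_v2 hj1 (by omega) (by omega)]
        have := (hvmid (a + 1) (by omega) (by omega)).1
        simpa using this
      · show (if (a + 1) % t = 0 then w else v (sigF j i t ((a + 1) % t))) ∈ _
        rw [Nat.mod_eq_of_lt (show a + 1 < t by omega), if_neg (by omega),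
            sig_v2 hj1 (by omega) (by omega)]
        exact (hvmid (a + 1) (by omega) (by omega)).2
    by_cases h4 : a = i - 1
    · rw [tau_v4 hj1 hji h4]
      constructor
      · rw [if_neg h0, sig_v2 hj1 (by omega) (by omega), h4]
        exact hvit
      · show (if (a + 1) % t = 0 then w else v (sigF j i t ((a + 1) % t))) ∈ _
        rw [Nat.mod_eq_of_lt (show a + 1 < t by omega), if_neg (by omega),
            sig_v3 hji (by omega), show t - 1 + i - (a + 1) = t - 1 from by omega]
        exact hvt
    by_cases h5 : a ≤ t - 2
    · rw [tau_v5 hji (by omega) h5]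
      constructor
      · rw [if_neg h0, sig_v3 hji (by omega)]
        exact (hvmid (t - 1 + i - a) (by omega) (by omega)).2
      · show (if (a + 1) % t = 0 then w else v (sigF j i t ((a + 1) % t))) ∈ _
        rw [Nat.mod_eq_of_lt (show a + 1 < t by omega), if_neg (by omega),
            sig_v3 hji (by omega), show t - 1 + i - (a + 1) = t - 1 + i - a - 1 from by omega]
        exact (hvmid (t - 1 + i - a) (by omega) (by omega)).1
    · have h6 : a = t - 1 := by omega
      rw [tau_v6 hj1 hji hit' h6]
      constructor
      · rw [if_neg h0, sig_v3 hji (by omega), show t - 1 + i - a = i from by omega]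
        exact (hvmid i hi2 hit).2
      · show (if (a + 1) % t = 0 then w else v (sigF j i t ((a + 1) % t))) ∈ _
        rw [show a + 1 = t from by omega, Nat.mod_self, if_pos rfl]
        exact hwi

end BergeM
end

section
/- For all integers r and k with r ≥ 3 and r+1 ≤ k ≤ 2r−1, there exists an integer N such that for all n ≥ N there exists an n-vertex connected BP_k-free r-uniform hypergraph with exactly n − (k−2) + C(k−2, r) hyperedges, where C(k−2, r) is the binomial coefficient; consequently ex^conn_r(n,BP_k) ≥ n − (k−2) + C(k−2, r) for all n ≥ N. -/
namespace Berge

def IsBergePath {n : ℕ} (E : Finset (Finset (Fin n))) (k : ℕ)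
    (v : Fin (k + 1) → Fin n) (f : Fin k → Finset (Fin n)) : Prop :=
  Function.Injective v ∧ Function.Injective f ∧ (∀ i, f i ∈ E) ∧
    ∀ i : Fin k, v i.castSucc ∈ f i ∧ v i.succ ∈ f i

def HasBergePath {n : ℕ} (E : Finset (Finset (Fin n))) (k : ℕ) : Prop :=
  ∃ v f, IsBergePath E k v f

def BPFree {n : ℕ} (E : Finset (Finset (Fin n))) (k : ℕ) : Prop :=
  ¬ HasBergePath E k

def Connected {n : ℕ} (E : Finset (Finset (Fin n))) : Prop :=
  ∀ x y : Fin n, ∃ (k : ℕ) (v : Fin (k + 1) → Fin n) (f : Fin k → Finset (Fin n)),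
    IsBergePath E k v f ∧ (∃ i, v i = x) ∧ (∃ i, v i = y)

def Uniform {n : ℕ} (E : Finset (Finset (Fin n))) (r : ℕ) : Prop :=
  ∀ e ∈ E, e.card = r

noncomputable def exConn (n r k : ℕ) : ℕ :=
  sSup {m | ∃ E : Finset (Finset (Fin n)),
    Uniform E r ∧ Connected E ∧ BPFree E k ∧ E.card = m}

def IsBergeCycle {n : ℕ} (E : Finset (Finset (Fin n))) (k : ℕ)
    (v : Fin k → Fin n) (f : Fin k → Finset (Fin n)) : Prop :=
  Function.Injective v ∧ Function.Injective f ∧ (∀ i, f i ∈ E) ∧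
    ∀ i : Fin k, v i ∈ f i ∧ v ⟨(i.val + 1) % k, Nat.mod_lt _ i.pos⟩ ∈ f i


lemma inj1 {α : Type*} (g : Fin 1 → α) : Function.Injective g :=
  fun a b _ => Subsingleton.elim a b

lemma inj2 {α : Type*} {a b : α} (h : a ≠ b) : Function.Injective ![a, b] := by
  intro i j hij
  fin_cases i <;> fin_cases j <;> simp_all

lemma inj3 {α : Type*} {a b c : α} (hab : a ≠ b) (hac : a ≠ c) (hbc : b ≠ c) :
    Function.Injective ![a, b, c] := by
  intro i j hij
  fin_cases i <;> fin_cases j <;> simp_all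

lemma card_filter_lt (n m : ℕ) (h : m ≤ n) :
    (Finset.univ.filter (fun x : Fin n => x.val < m)).card = m := by
  have he : (Finset.univ.filter (fun x : Fin n => x.val < m)) =
      Finset.map (Fin.castLEEmb h) Finset.univ := by
    ext x
    rw [Finset.mem_map]
    constructor
    · intro hx
      exact ⟨⟨x.val, (Finset.mem_filter.1 hx).2⟩, Finset.mem_univ _, by ext; rfl⟩
    · rintro ⟨y, -, rfl⟩
      exact Finset.mem_filter.2 ⟨Finset.mem_univ _, y.isLt⟩
  rw [he, Finset.card_map, Finset.card_univ, Fintype.card_fin]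

theorem stmt19 (r k : ℕ) (hr : 3 ≤ r) (hk1 : r + 1 ≤ k) (hk2 : k ≤ 2 * r - 1) :
    ∃ N : ℕ, ∀ n : ℕ, N ≤ n →
      (∃ E : Finset (Finset (Fin n)), Uniform E r ∧ Connected E ∧ BPFree E k ∧
        E.card = n - (k - 2) + Nat.choose (k - 2) r) ∧
      n - (k - 2) + Nat.choose (k - 2) r ≤ exConn n r k := by
  refine ⟨k + r, fun n hn => ?_⟩
  have hn2 : k - 2 + 2 ≤ n := by omega
  -- the construction
  set B : Finset (Fin n) := Finset.univ.filter (fun x => x.val < r - 1) with hB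
  set A : Finset (Fin n) := Finset.univ.filter (fun x => x.val < k - 2) with hA
  set E1 : Finset (Finset (Fin n)) :=
    (Finset.univ.filter (fun v : Fin n => k - 2 ≤ v.val)).image (fun v => insert v B) with hE1
  set E2 : Finset (Finset (Fin n)) := Finset.powersetCard r A with hE2
  set E : Finset (Finset (Fin n)) := E1 ∪ E2 with hE
  have hmemB : ∀ x : Fin n, x ∈ B ↔ x.val < r - 1 := by
    intro x; simp [hB]
  have hmemA : ∀ x : Fin n, x ∈ A ↔ x.val < k - 2 := by
    intro x; simp [hA]
  have hBcard : B.card = r - 1 := card_filter_lt n (r - 1) (by omega)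
  have hAcard : A.card = k - 2 := card_filter_lt n (k - 2) (by omega)
  -- membership characterizations for edges
  have hE1mem : ∀ e ∈ E1, ∃ w : Fin n, k - 2 ≤ w.val ∧ e = insert w B := by
    intro e he
    simp only [hE1, Finset.mem_image, Finset.mem_filter, Finset.mem_univ, true_and] at he
    obtain ⟨w, hw, rfl⟩ := he
    exact ⟨w, hw, rfl⟩
  have hE2mem : ∀ e ∈ E2, e ⊆ A ∧ e.card = r := by
    intro e he
    rwa [hE2, Finset.mem_powersetCard] at he
  -- uniqueness of the edge at an outside vertex
  have huniq : ∀ x : Fin n, k - 2 ≤ x.val → ∀ e ∈ E, x ∈ e → e = insert x B := by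
    intro x hx e he hxe
    rcases Finset.mem_union.1 he with he1 | he2
    · obtain ⟨w, hw, rfl⟩ := hE1mem e he1
      rcases Finset.mem_insert.1 hxe with rfl | hxB
      · rfl
      · exact absurd ((hmemB x).1 hxB) (by omega)
    · obtain ⟨hsub, -⟩ := hE2mem e he2
      exact absurd ((hmemA x).1 (hsub hxe)) (by omega)
  -- uniformity
  have hUnif : Uniform E r := by
    intro e he
    rcases Finset.mem_union.1 he with he1 | he2
    · obtain ⟨w, hw, rfl⟩ := hE1mem e he1
      have hwB : w ∉ B := fun hwB => absurd ((hmemB w).1 hwB) (by omega)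
      rw [Finset.card_insert_of_notMem hwB, hBcard]
      omega
    · exact (hE2mem e he2).2
  -- the distinguished vertex v0
  have hn1 : 0 < n := by omega
  set v0 : Fin n := ⟨0, hn1⟩ with hv0
  have hv0B : v0 ∈ B := (hmemB v0).2 (by simp [hv0]; omega)
  -- every vertex lies on an edge also containing v0
  have hedge : ∀ z : Fin n, ∃ e ∈ E, z ∈ e ∧ v0 ∈ e := by
    intro z
    by_cases hz1 : z.val < r - 1
    · -- z ∈ B: use the pendant edge at the last vertex
      set w : Fin n := ⟨n - 1, by omega⟩ with hw
      refine ⟨insert w B, ?_, ?_, ?_⟩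
      · refine Finset.mem_union_left _ ?_
        simp only [hE1, Finset.mem_image, Finset.mem_filter, Finset.mem_univ, true_and]
        exact ⟨w, by simp [hw]; omega, rfl⟩
      · exact Finset.mem_insert_of_mem ((hmemB z).2 hz1)
      · exact Finset.mem_insert_of_mem hv0B
    · by_cases hz2 : z.val < k - 2
      · -- z ∈ A \ B: then k - 2 ≥ r, use an r-subset of A containing z and v0
        have hkr : r ≤ k - 2 := by omega
        have hsub : ({z, v0} : Finset (Fin n)) ⊆ A := by
          intro x hx
          rcases Finset.mem_insert.1 hx with rfl | hx
          · exact (hmemA x).2 hz2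
          · rw [Finset.mem_singleton] at hx
            subst hx
            exact (hmemA v0).2 (by simp [hv0]; omega)
        have hc : ({z, v0} : Finset (Fin n)).card ≤ r :=
          le_trans (Finset.card_insert_le _ _) (by simp; omega)
        obtain ⟨u, hsu, huA, hucard⟩ :=
          Finset.exists_subsuperset_card_eq hsub hc (by rw [hAcard]; exact hkr)
        refine ⟨u, Finset.mem_union_right _ ?_, ?_, ?_⟩
        · rw [hE2, Finset.mem_powersetCard]; exact ⟨huA, hucard⟩
        · exact hsu (Finset.mem_insert_self _ _)
        · exact hsu (Finset.mem_insert_of_mem (Finset.mem_singleton_self _))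
      · -- z outside: pendant edge at z
        refine ⟨insert z B, ?_, Finset.mem_insert_self _ _, Finset.mem_insert_of_mem hv0B⟩
        refine Finset.mem_union_left _ ?_
        simp only [hE1, Finset.mem_image, Finset.mem_filter, Finset.mem_univ, true_and]
        exact ⟨z, by omega, rfl⟩
  -- connectivity
  have hConn : Connected E := by
    intro x y
    by_cases hxy : x = y
    · subst hxy
      refine ⟨0, fun _ => x, Fin.elim0, ⟨inj1 _,
        fun a => a.elim0, fun a => a.elim0, fun a => a.elim0⟩, ⟨0, rfl⟩, ⟨0, rfl⟩⟩
    · obtain ⟨ex, hexE, hxex, h0ex⟩ := hedge x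
      obtain ⟨ey, heyE, hyey, h0ey⟩ := hedge y
      by_cases hsame : ∃ e ∈ E, x ∈ e ∧ y ∈ e
      · obtain ⟨e, heE, hxe, hye⟩ := hsame
        refine ⟨1, ![x, y], ![e], ⟨inj2 hxy, inj1 _,
          ?_, ?_⟩, ⟨0, rfl⟩, ⟨1, rfl⟩⟩
        · intro i; fin_cases i; exact heE
        · intro i; fin_cases i
          refine ⟨?_, ?_⟩ <;> simp [Matrix.cons_val_zero, Matrix.cons_val_one]
          · exact hxe
          · exact hye
      · push_neg at hsame
        have hxney : ex ≠ ey := by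
          intro h
          exact hsame ex hexE hxex (h ▸ hyey)
        have hx0 : x ≠ v0 := by
          intro h
          exact hsame ey heyE (h ▸ h0ey) hyey
        have hy0 : y ≠ v0 := by
          intro h
          exact hsame ex hexE hxex (h ▸ h0ex)
        refine ⟨2, ![x, v0, y], ![ex, ey], ⟨inj3 hx0 hxy (Ne.symm hy0), inj2 hxney,
          ?_, ?_⟩, ⟨0, rfl⟩, ⟨2, rfl⟩⟩
        · intro i; fin_cases i
          · exact hexE
          · exact heyE
        · intro i; fin_cases i
          · refine ⟨?_, ?_⟩ <;> simp [Matrix.cons_val_zero, Matrix.cons_val_one]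
            · exact hxex
            · exact h0ex
          · refine ⟨?_, ?_⟩ <;> simp [Matrix.cons_val_zero, Matrix.cons_val_one]
            · exact h0ey
            · exact hyey
  -- BP_k-freeness
  have hFree : BPFree E k := by
    rintro ⟨v, f, hvinj, hfinj, hfE, hcond⟩
    have houtside : ∀ i : Fin (k + 1), i ≠ 0 → i ≠ Fin.last k → (v i).val < k - 2 := by
      intro i hi0 hil
      by_contra hout
      push_neg at hout
      have hi0' : 0 < i.val := Nat.pos_of_ne_zero (fun h => hi0 (Fin.ext h))
      have hil' : i.val < k := by
        have := i.isLt
        rcases Nat.lt_or_ge i.val k with h | h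
        · exact h
        · exact absurd (Fin.ext (by rw [Fin.val_last]; omega)) hil
      set a : Fin k := ⟨i.val - 1, by omega⟩ with ha
      set b : Fin k := ⟨i.val, hil'⟩ with hb
      have hasucc : a.succ = i := by ext; simp [ha]; omega
      have hbcast : b.castSucc = i := by ext; simp [hb]
      have hva : v i ∈ f a := hasucc ▸ (hcond a).2
      have hvb : v i ∈ f b := hbcast ▸ (hcond b).1
      have h1 : f a = insert (v i) B := huniq _ hout _ (hfE a) hva
      have h2 : f b = insert (v i) B := huniq _ hout _ (hfE b) hvb
      have : a = b := hfinj (h1.trans h2.symm)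
      have : a.val = b.val := by rw [this]
      simp [ha, hb] at this
      omega
    have hsub : Finset.univ.image v ⊆ A ∪ {v 0, v (Fin.last k)} := by
      intro x hx
      obtain ⟨i, -, rfl⟩ := Finset.mem_image.1 hx
      by_cases hi0 : i = 0
      · subst hi0; exact Finset.mem_union_right _ (by simp)
      · by_cases hil : i = Fin.last k
        · subst hil; exact Finset.mem_union_right _ (by simp)
        · exact Finset.mem_union_left _ ((hmemA _).2 (houtside i hi0 hil))
    have hcard1 : (Finset.univ.image v).card = k + 1 := by
      rw [Finset.card_image_of_injective _ hvinj, Finset.card_univ, Fintype.card_fin]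
    have hcard2 : (A ∪ {v 0, v (Fin.last k)}).card ≤ (k - 2) + 2 := by
      refine le_trans (Finset.card_union_le _ _) ?_
      have h2 : ({v 0, v (Fin.last k)} : Finset (Fin n)).card ≤ 2 :=
        Finset.card_insert_le _ _ |>.trans (by simp)
      omega
    have := Finset.card_le_card hsub
    rw [hcard1] at this
    omega
  -- cardinality
  have hdisj : Disjoint E1 E2 := by
    rw [Finset.disjoint_left]
    intro e he1 he2
    obtain ⟨w, hw, rfl⟩ := hE1mem e he1
    obtain ⟨hsub, -⟩ := hE2mem _ he2
    exact absurd ((hmemA w).1 (hsub (Finset.mem_insert_self _ _))) (by omega)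
  have hcount : (Finset.univ.filter (fun v : Fin n => k - 2 ≤ v.val)).card = n - (k - 2) := by
    have h1 := card_filter_lt n (k - 2) (by omega)
    have h2 : (Finset.univ.filter (fun x : Fin n => x.val < k - 2)).card +
        (Finset.univ.filter (fun x : Fin n => ¬ x.val < k - 2)).card = n := by
      rw [Finset.card_filter_add_card_filter_not, Finset.card_univ, Fintype.card_fin]
    have h3 : (Finset.univ.filter (fun x : Fin n => ¬ x.val < k - 2)) =
        (Finset.univ.filter (fun v : Fin n => k - 2 ≤ v.val)) := by
      apply Finset.filter_congr
      intro x _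
      simp [Nat.not_lt]
    rw [h3] at h2
    omega
  have hE1card : E1.card = n - (k - 2) := by
    rw [hE1, Finset.card_image_of_injOn, hcount]
    intro a ha bb hb h
    simp only [Finset.mem_coe, Finset.mem_filter, Finset.mem_univ, true_and] at ha hb
    have h' : insert a B = insert bb B := h
    have : a ∈ insert bb B := h' ▸ Finset.mem_insert_self a B
    rcases Finset.mem_insert.1 this with h' | h'
    · exact h'
    · exact absurd ((hmemB a).1 h') (by omega)
  have hE2card : E2.card = Nat.choose (k - 2) r := by
    rw [hE2, Finset.card_powersetCard, hAcard]
  have hEcard : E.card = n - (k - 2) + Nat.choose (k - 2) r := by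
    rw [hE, Finset.card_union_of_disjoint hdisj, hE1card, hE2card]
  refine ⟨⟨E, hUnif, hConn, hFree, hEcard⟩, ?_⟩
  apply le_csSup
  · refine ⟨Fintype.card (Finset (Fin n)), fun m hm => ?_⟩
    obtain ⟨E', -, -, -, hcard⟩ := hm
    rw [← hcard]
    exact Finset.card_le_univ _
  · exact ⟨E, hUnif, hConn, hFree, hEcard⟩


end Berge
end
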